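/- arXiv:math/0607391 — 3 statements merged into one kernel-verified Lean document; each statement's English description precedes it below -/
import Mathlib

section
/- The subspace {f ∈ End(ℂ𝔖_n) : (1 − σ̄_i)·f·(1 + σ̄_i) = 0 for all i = 1,…,n−1} (products composed left to right) has dimension equal to the number of pairs (μ, ν) of permutations of {1,…,n} with Des(μ) ∩ Des(ν) = ∅; equivalently, the linear relations on End(ℂ𝔖_n) cutting out this subspace, indexed by pairs of permutations having a common descent, are linearly independent. -/
open scoped Classical

set_option maxHeartbeats 1000000
set_option synthInstance.maxHeartbeats 400000

noncomputable section

/-- The symmetric group on `{1, …, n}`, 0-indexed as permutations of `Fin n`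
(so positions/descents are indexed by `i ∈ {0, …, n-2}` instead of `{1, …, n-1}`). -/
abbrev PermN (n : ℕ) := Equiv.Perm (Fin n)

/-- The vector space `ℂ𝔖ₙ` with basis the symmetric group. -/
abbrev CS (n : ℕ) := Equiv.Perm (Fin n) →₀ ℂ

/-- The elementary transposition `sᵢ` exchanging `i` and `i+1` (0-indexed). -/
def swapAt (n i : ℕ) (h : i + 1 < n) : PermN n :=
  Equiv.swap ⟨i, Nat.lt_of_succ_lt h⟩ ⟨i + 1, h⟩

/-- The operator `σᵢ` on `ℂ𝔖ₙ`: right multiplication by `sᵢ` (action on positions),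
`μ ↦ μ sᵢ`. -/
def sigmaOp (n i : ℕ) : Module.End ℂ (CS n) :=
  if h : i + 1 < n then Finsupp.lmapDomain ℂ ℂ (fun μ => μ * swapAt n i h) else 1

/-- The elementary decreasing sorting operator `πᵢ` on `ℂ𝔖ₙ`:
`μ ↦ μ` if `μᵢ > μᵢ₊₁` and `μ ↦ μ sᵢ` otherwise. -/
def piOp (n i : ℕ) : Module.End ℂ (CS n) :=
  if h : i + 1 < n then
    Finsupp.lmapDomain ℂ ℂ (fun μ : PermN n =>
      if μ ⟨i + 1, h⟩ < μ ⟨i, Nat.lt_of_succ_lt h⟩ then μ else μ * swapAt n i h)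
  else 1

/-- The operator `σ̄ᵢ` on `ℂ𝔖ₙ`: left multiplication by `sᵢ` (action on values),
`μ ↦ sᵢ μ`. -/
def sigmaBarOp (n i : ℕ) : Module.End ℂ (CS n) :=
  if h : i + 1 < n then Finsupp.lmapDomain ℂ ℂ (fun μ => swapAt n i h * μ) else 1

/-- The operator `σ_σ` of right multiplication by a permutation `σ`
(equal to the product of the `σᵢ` along any reduced word for `σ`). -/
def rightMulOp (n : ℕ) (σ : PermN n) : Module.End ℂ (CS n) :=
  Finsupp.lmapDomain ℂ ℂ (fun μ => μ * σ)

/-- The algebra `H𝔖ₙ`: the subalgebra of `End(ℂ𝔖ₙ)` generated by the operators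
`σ₁, …, σ_{n-1}, π₁, …, π_{n-1}`.

Note on conventions: the paper composes operators left to right, `v·(fg) = (v·f)·g`,
while multiplication in `Module.End` is `(f * g) v = f (g v)`.  Hence the paper's
product `f·g` is `g * f` here.  This does not affect the generated subalgebra. -/
def HS (n : ℕ) : Subalgebra ℂ (Module.End ℂ (CS n)) :=
  Algebra.adjoin ℂ
    ({f | ∃ i, ∃ _ : i + 1 < n, f = sigmaOp n i} ∪ {f | ∃ i, ∃ _ : i + 1 < n, f = piOp n i})

/-- The descent set `Des(μ) = {i : μᵢ > μᵢ₊₁}` (0-indexed positions). -/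
def Des (n : ℕ) (μ : PermN n) : Set ℕ :=
  {i | ∃ h : i + 1 < n, μ ⟨i + 1, h⟩ < μ ⟨i, Nat.lt_of_succ_lt h⟩}


-- Helper instances (present in Mathlib, but provided here explicitly to avoid
-- very deep instance searches on `Module.End ℂ (CS n)`).
noncomputable instance (priority := 10000) endSubACG (n : ℕ)
    (N : Submodule ℂ (Module.End ℂ (CS n))) : AddCommGroup ↥N :=
  @Submodule.addCommGroup ℂ (Module.End ℂ (CS n)) _ _ _ N

noncomputable instance (priority := 10000) subalgRing (n : ℕ)
    (S : Subalgebra ℂ (Module.End ℂ (CS n))) : Ring ↥S :=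
  @Subalgebra.toRing ℂ (Module.End ℂ (CS n)) _ _ _ S

noncomputable instance (priority := 10000) subalgACG (n : ℕ)
    (S : Subalgebra ℂ (Module.End ℂ (CS n))) : AddCommGroup ↥S :=
  (subalgRing n S).toAddCommGroup

noncomputable instance (priority := 10000) subalgMod (n : ℕ)
    (S : Subalgebra ℂ (Module.End ℂ (CS n))) : Module ℂ ↥S :=
  (Subalgebra.toSubmodule S).module'

/-- The subspace of `End(ℂ𝔖ₙ)` cut out by the sandwich equations
`(1 - σ̄ᵢ)·f·(1 + σ̄ᵢ) = 0` (left-to-right composition). -/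
def sandwichSpace (n : ℕ) : Submodule ℂ (Module.End ℂ (CS n)) :=
  ⨅ i : {i : ℕ // i + 1 < n},
    LinearMap.ker ((LinearMap.mulLeft ℂ (1 + sigmaBarOp n i.1)).comp
      (LinearMap.mulRight ℂ (1 - sigmaBarOp n i.1)))

variable {n : ℕ}

def invC (μ : PermN n) : ℕ :=
  ((Finset.univ : Finset (Fin n × Fin n)).filter (fun q => q.1 < q.2 ∧ μ q.2 < μ q.1)).card

def isLD (i : ℕ) (h : i + 1 < n) (μ : PermN n) : Prop :=
  μ⁻¹ ⟨i + 1, h⟩ < μ⁻¹ ⟨i, Nat.lt_of_succ_lt h⟩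

lemma swap_lt_iff (i : ℕ) (h : i + 1 < n) (x y : Fin n) :
    swapAt n i h x < swapAt n i h y ↔
      ((x = ⟨i + 1, h⟩ ∧ y = ⟨i, Nat.lt_of_succ_lt h⟩) ∨
        (x < y ∧ ¬(x = ⟨i, Nat.lt_of_succ_lt h⟩ ∧ y = ⟨i + 1, h⟩))) := by
  rcases x with ⟨xv, hx⟩
  rcases y with ⟨yv, hy⟩
  simp only [swapAt, Equiv.swap_apply_def, Fin.mk.injEq, Fin.mk_lt_mk, Fin.ext_iff]
  split_ifs <;> simp only [Fin.mk_lt_mk, Fin.mk.injEq] <;> omega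

lemma swap_inv_self (i : ℕ) (h : i + 1 < n) : (swapAt n i h)⁻¹ = swapAt n i h := by
  simp [swapAt]

lemma inv_apply_left (i : ℕ) (h : i + 1 < n) (μ : PermN n) (x : Fin n) :
    (swapAt n i h * μ)⁻¹ x = μ⁻¹ (swapAt n i h x) := by
  rw [mul_inv_rev, swap_inv_self, Equiv.Perm.mul_apply]

lemma swap_swap_cancel (i : ℕ) (h : i + 1 < n) (μ : PermN n) :
    swapAt n i h * (swapAt n i h * μ) = μ := by
  rw [← mul_assoc, swapAt, Equiv.swap_mul_self, one_mul]

lemma isLD_swap_iff (i : ℕ) (h : i + 1 < n) (μ : PermN n) :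
    isLD i h (swapAt n i h * μ) ↔ ¬ isLD i h μ := by
  have hb : swapAt n i h ⟨i + 1, h⟩ = ⟨i, Nat.lt_of_succ_lt h⟩ := Equiv.swap_apply_right _ _
  have ha : swapAt n i h ⟨i, Nat.lt_of_succ_lt h⟩ = ⟨i + 1, h⟩ := Equiv.swap_apply_left _ _
  have hne : μ⁻¹ ⟨i, Nat.lt_of_succ_lt h⟩ ≠ μ⁻¹ ⟨i + 1, h⟩ := by
    intro hc
    have := μ⁻¹.injective hc
    simp [Fin.ext_iff] at this
  constructor
  · intro hx hy
    rw [isLD, inv_apply_left, inv_apply_left, hb, ha] at hx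
    exact absurd hy (not_lt.2 hx.le)
  · intro hx
    rw [isLD, inv_apply_left, inv_apply_left, hb, ha]
    rcases lt_or_gt_of_ne hne with h1 | h1
    · exact h1
    · exact absurd h1 hx

lemma invC_lt_of_isLD {i : ℕ} {h : i + 1 < n} {μ : PermN n} (hLD : isLD i h μ) :
    invC (swapAt n i h * μ) < invC μ := by
  classical
  apply Finset.card_lt_card
  rw [Finset.ssubset_iff_of_subset]
  · refine ⟨(μ⁻¹ ⟨i + 1, h⟩, μ⁻¹ ⟨i, Nat.lt_of_succ_lt h⟩), ?_, ?_⟩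
    · simp only [Finset.mem_filter, Finset.mem_univ, true_and]
      refine ⟨hLD, ?_⟩
      simp only [Equiv.Perm.coe_inv, Equiv.apply_symm_apply]
      exact Fin.mk_lt_mk.2 (Nat.lt_succ_self i)
    · simp only [Finset.mem_filter, Finset.mem_univ, true_and, not_and]
      intro _
      simp only [Equiv.Perm.mul_apply, Equiv.Perm.coe_inv, Equiv.apply_symm_apply, swapAt,
        Equiv.swap_apply_left, Equiv.swap_apply_right]
      intro hc
      exact absurd (Fin.mk_lt_mk.1 hc) (by omega)
  · intro ⟨p, q⟩ hm
    simp only [Finset.mem_filter, Finset.mem_univ, true_and] at hm ⊢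
    obtain ⟨hpq, hin⟩ := hm
    refine ⟨hpq, ?_⟩
    simp only [Equiv.Perm.mul_apply] at hin
    rcases (swap_lt_iff i h (μ q) (μ p)).1 hin with ⟨h1, h2⟩ | ⟨h1, _⟩
    · exfalso
      have hq : q = μ⁻¹ ⟨i + 1, h⟩ := by rw [← h1]; simp
      have hp : p = μ⁻¹ ⟨i, Nat.lt_of_succ_lt h⟩ := by rw [← h2]; simp
      rw [hq, hp] at hpq
      exact absurd hLD (not_lt.2 hpq.le)
    · exact h1
lemma fin_ne_of_ne {a b : ℕ} (ha : a < n) (hb : b < n) (h : a ≠ b) :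
    (⟨a, ha⟩ : Fin n) ≠ ⟨b, hb⟩ := by
  simp [Fin.ext_iff]; omega

lemma isLD_far (i j : ℕ) (h : i + 1 < n) (hj : j + 1 < n)
    (hfar : i + 1 < j ∨ j + 1 < i) (μ : PermN n) :
    isLD i h (swapAt n j hj * μ) ↔ isLD i h μ := by
  unfold isLD
  rw [inv_apply_left, inv_apply_left]
  have e1 : swapAt n j hj ⟨i + 1, h⟩ = ⟨i + 1, h⟩ := by
    rw [swapAt]
    exact Equiv.swap_apply_of_ne_of_ne (fin_ne_of_ne _ _ (by omega)) (fin_ne_of_ne _ _ (by omega))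
  have e2 : swapAt n j hj ⟨i, Nat.lt_of_succ_lt h⟩ = ⟨i, Nat.lt_of_succ_lt h⟩ := by
    rw [swapAt]
    exact Equiv.swap_apply_of_ne_of_ne (fin_ne_of_ne _ _ (by omega)) (fin_ne_of_ne _ _ (by omega))
  rw [e1, e2]

section adjacent
variable {k : ℕ} (hk2 : k + 1 + 1 < n) {μ : PermN n}

lemma adj_f1 (hA : isLD k (Nat.lt_of_succ_lt hk2) μ) (hB : isLD (k + 1) hk2 μ) :
    isLD (k + 1) hk2 (swapAt n k (Nat.lt_of_succ_lt hk2) * μ) := by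
  unfold isLD at *
  rw [inv_apply_left, inv_apply_left]
  have e1 : swapAt n k (Nat.lt_of_succ_lt hk2) ⟨k + 1 + 1, hk2⟩ = ⟨k + 1 + 1, hk2⟩ := by
    rw [swapAt]
    exact Equiv.swap_apply_of_ne_of_ne (fin_ne_of_ne _ _ (by omega)) (fin_ne_of_ne _ _ (by omega))
  have e2 : swapAt n k (Nat.lt_of_succ_lt hk2) ⟨k + 1, Nat.lt_of_succ_lt hk2⟩ =
      ⟨k, Nat.lt_of_succ_lt (Nat.lt_of_succ_lt hk2)⟩ := by
    rw [swapAt]; exact Equiv.swap_apply_right _ _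
  rw [e1, e2]
  exact lt_trans hB hA

lemma adj_f2 (hA : isLD k (Nat.lt_of_succ_lt hk2) μ) (hB : isLD (k + 1) hk2 μ) :
    isLD k (Nat.lt_of_succ_lt hk2) (swapAt n (k + 1) hk2 * μ) := by
  unfold isLD at *
  rw [inv_apply_left, inv_apply_left]
  have e1 : swapAt n (k + 1) hk2 ⟨k + 1, Nat.lt_of_succ_lt hk2⟩ = ⟨k + 1 + 1, hk2⟩ := by
    rw [swapAt]; exact Equiv.swap_apply_left _ _
  have e2 : swapAt n (k + 1) hk2 ⟨k, Nat.lt_of_succ_lt (Nat.lt_of_succ_lt hk2)⟩ = ⟨k, Nat.lt_of_succ_lt (Nat.lt_of_succ_lt hk2)⟩ := by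
    rw [swapAt]
    exact Equiv.swap_apply_of_ne_of_ne (fin_ne_of_ne _ _ (by omega)) (fin_ne_of_ne _ _ (by omega))
  rw [e1, e2]
  exact lt_trans hB hA

lemma adj_f3 (hA : isLD k (Nat.lt_of_succ_lt hk2) μ) (hB : isLD (k + 1) hk2 μ) :
    isLD k (Nat.lt_of_succ_lt hk2)
      (swapAt n (k + 1) hk2 * (swapAt n k (Nat.lt_of_succ_lt hk2) * μ)) := by
  unfold isLD at *
  rw [inv_apply_left, inv_apply_left, inv_apply_left, inv_apply_left]
  have e1 : swapAt n (k + 1) hk2 ⟨k + 1, Nat.lt_of_succ_lt hk2⟩ = ⟨k + 1 + 1, hk2⟩ := by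
    rw [swapAt]; exact Equiv.swap_apply_left _ _
  have e2 : swapAt n k (Nat.lt_of_succ_lt hk2) ⟨k + 1 + 1, hk2⟩ = ⟨k + 1 + 1, hk2⟩ := by
    rw [swapAt]
    exact Equiv.swap_apply_of_ne_of_ne (fin_ne_of_ne _ _ (by omega)) (fin_ne_of_ne _ _ (by omega))
  have e3 : swapAt n (k + 1) hk2 ⟨k, Nat.lt_of_succ_lt (Nat.lt_of_succ_lt hk2)⟩ = ⟨k, Nat.lt_of_succ_lt (Nat.lt_of_succ_lt hk2)⟩ := by
    rw [swapAt]
    exact Equiv.swap_apply_of_ne_of_ne (fin_ne_of_ne _ _ (by omega)) (fin_ne_of_ne _ _ (by omega))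
  have e4 : swapAt n k (Nat.lt_of_succ_lt hk2) ⟨k, Nat.lt_of_succ_lt (Nat.lt_of_succ_lt hk2)⟩ = ⟨k + 1, Nat.lt_of_succ_lt hk2⟩ := by
    rw [swapAt]; exact Equiv.swap_apply_left _ _
  rw [e1, e2, e3, e4]
  exact hB

lemma adj_f4 (hA : isLD k (Nat.lt_of_succ_lt hk2) μ) (hB : isLD (k + 1) hk2 μ) :
    isLD (k + 1) hk2
      (swapAt n k (Nat.lt_of_succ_lt hk2) * (swapAt n (k + 1) hk2 * μ)) := by
  unfold isLD at *
  rw [inv_apply_left, inv_apply_left, inv_apply_left, inv_apply_left]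
  have e1 : swapAt n k (Nat.lt_of_succ_lt hk2) ⟨k + 1 + 1, hk2⟩ = ⟨k + 1 + 1, hk2⟩ := by
    rw [swapAt]
    exact Equiv.swap_apply_of_ne_of_ne (fin_ne_of_ne _ _ (by omega)) (fin_ne_of_ne _ _ (by omega))
  have e2 : swapAt n (k + 1) hk2 ⟨k + 1 + 1, hk2⟩ = ⟨k + 1, Nat.lt_of_succ_lt hk2⟩ := by
    rw [swapAt, Equiv.swap_apply_right]
  have e3 : swapAt n k (Nat.lt_of_succ_lt hk2) ⟨k + 1, Nat.lt_of_succ_lt hk2⟩ =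
      ⟨k, Nat.lt_of_succ_lt (Nat.lt_of_succ_lt hk2)⟩ := by
    rw [swapAt, Equiv.swap_apply_right]
  have e4 : swapAt n (k + 1) hk2 ⟨k, Nat.lt_of_succ_lt (Nat.lt_of_succ_lt hk2)⟩ = ⟨k, Nat.lt_of_succ_lt (Nat.lt_of_succ_lt hk2)⟩ := by
    rw [swapAt]
    exact Equiv.swap_apply_of_ne_of_ne (fin_ne_of_ne _ _ (by omega)) (fin_ne_of_ne _ _ (by omega))
  rw [e1, e2, e3, e4]
  exact hA

lemma braid (μ : PermN n) :
    swapAt n k (Nat.lt_of_succ_lt hk2) * (swapAt n (k + 1) hk2 *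
        (swapAt n k (Nat.lt_of_succ_lt hk2) * μ)) =
      swapAt n (k + 1) hk2 * (swapAt n k (Nat.lt_of_succ_lt hk2) *
        (swapAt n (k + 1) hk2 * μ)) := by
  have key : swapAt n k (Nat.lt_of_succ_lt hk2) * swapAt n (k + 1) hk2 *
      swapAt n k (Nat.lt_of_succ_lt hk2) =
      swapAt n (k + 1) hk2 * swapAt n k (Nat.lt_of_succ_lt hk2) * swapAt n (k + 1) hk2 := by
    simp only [swapAt]
    set a : Fin n := ⟨k, Nat.lt_of_succ_lt (Nat.lt_of_succ_lt hk2)⟩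
    set b : Fin n := ⟨k + 1, Nat.lt_of_succ_lt hk2⟩
    set c : Fin n := ⟨k + 1 + 1, hk2⟩
    have hab : a ≠ b := fin_ne_of_ne _ _ (by omega)
    have hac : a ≠ c := fin_ne_of_ne _ _ (by omega)
    have hcb : c ≠ b := fin_ne_of_ne _ _ (by omega)
    have h1 : Equiv.swap b c * Equiv.swap a b * Equiv.swap b c = Equiv.swap c a :=
      Equiv.swap_mul_swap_mul_swap hab hac
    have h2 : Equiv.swap b a * Equiv.swap c b * Equiv.swap b a = Equiv.swap a c :=
      Equiv.swap_mul_swap_mul_swap hcb hac.symm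
    rw [Equiv.swap_comm b a, Equiv.swap_comm c b] at h2
    rw [h1, h2, Equiv.swap_comm]
  calc swapAt n k (Nat.lt_of_succ_lt hk2) * (swapAt n (k + 1) hk2 *
        (swapAt n k (Nat.lt_of_succ_lt hk2) * μ))
      = swapAt n k (Nat.lt_of_succ_lt hk2) * swapAt n (k + 1) hk2 *
        swapAt n k (Nat.lt_of_succ_lt hk2) * μ := by rw [mul_assoc, mul_assoc]
    _ = swapAt n (k + 1) hk2 * swapAt n k (Nat.lt_of_succ_lt hk2) * swapAt n (k + 1) hk2 * μ := by
        rw [key]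
    _ = _ := by rw [mul_assoc, mul_assoc]

end adjacent

lemma swap_comm_far (i j : ℕ) (hi : i + 1 < n) (hj : j + 1 < n) (hfar : i + 1 < j ∨ j + 1 < i)
    (μ : PermN n) :
    swapAt n i hi * (swapAt n j hj * μ) = swapAt n j hj * (swapAt n i hi * μ) := by
  have key : swapAt n i hi * swapAt n j hj = swapAt n j hj * swapAt n i hi := by
    rw [swapAt, swapAt, Equiv.swap_mul_eq_mul_swap]
    congr 1
    rw [Equiv.swap_inv]
    rw [Equiv.swap_apply_of_ne_of_ne (fin_ne_of_ne _ _ (by omega)) (fin_ne_of_ne _ _ (by omega)),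
      Equiv.swap_apply_of_ne_of_ne (fin_ne_of_ne _ _ (by omega)) (fin_ne_of_ne _ _ (by omega))]
  rw [← mul_assoc, key, mul_assoc]
/-- The sandwich relation for a coefficient function. -/
def SRel (F : PermN n × PermN n → ℂ) (i : ℕ) (h : i + 1 < n) (μ ν : PermN n) : Prop :=
  F (μ, ν) + F (swapAt n i h * μ, ν) =
    F (μ, swapAt n i h * ν) + F (swapAt n i h * μ, swapAt n i h * ν)

lemma certComm (F : PermN n × PermN n → ℂ) (i j : ℕ) (hi : i + 1 < n) (hj : j + 1 < n)
    (hfar : i + 1 < j) (μ ν : PermN n)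
    (hμi : isLD i hi μ) (hνi : isLD i hi ν) (hμj : isLD j hj μ) (hνj : isLD j hj ν)
    (IH : ∀ (m : ℕ) (hm : m + 1 < n) (α β : PermN n), isLD m hm α → isLD m hm β →
      invC α + invC β < invC μ + invC ν → SRel F m hm α β) :
    (SRel F i hi μ ν ↔ SRel F j hj μ ν) := by
  have hfar' : i + 1 < j ∨ j + 1 < i := Or.inl hfar
  have hμi' : isLD i hi (swapAt n j hj * μ) := (isLD_far i j hi hj hfar' μ).2 hμi
  have hνi' : isLD i hi (swapAt n j hj * ν) := (isLD_far i j hi hj hfar' ν).2 hνi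
  have hμj' : isLD j hj (swapAt n i hi * μ) := (isLD_far j i hj hi (Or.symm hfar') μ).2 hμj
  have hνj' : isLD j hj (swapAt n i hi * ν) := (isLD_far j i hj hi (Or.symm hfar') ν).2 hνj
  have iaμ : invC (swapAt n i hi * μ) < invC μ := invC_lt_of_isLD hμi
  have iaν : invC (swapAt n i hi * ν) < invC ν := invC_lt_of_isLD hνi
  have ibμ : invC (swapAt n j hj * μ) < invC μ := invC_lt_of_isLD hμj
  have ibν : invC (swapAt n j hj * ν) < invC ν := invC_lt_of_isLD hνj
  have C1 : SRel F i hi (swapAt n j hj * μ) (swapAt n j hj * ν) :=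
    IH i hi _ _ hμi' hνi' (by omega)
  have C2 : SRel F i hi (swapAt n j hj * μ) ν := IH i hi _ _ hμi' hνi (by omega)
  have C3 : SRel F i hi μ (swapAt n j hj * ν) := IH i hi _ _ hμi hνi' (by omega)
  have C4 : SRel F j hj (swapAt n i hi * μ) (swapAt n i hi * ν) :=
    IH j hj _ _ hμj' hνj' (by omega)
  have C5 : SRel F j hj (swapAt n i hi * μ) ν := IH j hj _ _ hμj' hνj (by omega)
  have C6 : SRel F j hj μ (swapAt n i hi * ν) := IH j hj _ _ hμj hνj' (by omega)
  have commμ : swapAt n i hi * (swapAt n j hj * μ) = swapAt n j hj * (swapAt n i hi * μ) :=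
    swap_comm_far i j hi hj hfar' μ
  have commν : swapAt n i hi * (swapAt n j hj * ν) = swapAt n j hj * (swapAt n i hi * ν) :=
    swap_comm_far i j hi hj hfar' ν
  unfold SRel at C1 C2 C3 C4 C5 C6 ⊢
  rw [commμ] at C1 C2
  rw [commν] at C1 C3
  constructor
  · intro H
    linear_combination H - C1 + C2 - C3 + C4 - C5 + C6
  · intro H
    linear_combination H + C1 - C2 + C3 - C4 + C5 - C6

lemma certAdj (F : PermN n × PermN n → ℂ) (k : ℕ) (hk2 : k + 1 + 1 < n) (μ ν : PermN n)
    (hμk : isLD k (Nat.lt_of_succ_lt hk2) μ) (hμk1 : isLD (k + 1) hk2 μ)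
    (hνk : isLD k (Nat.lt_of_succ_lt hk2) ν) (hνk1 : isLD (k + 1) hk2 ν)
    (IH : ∀ (m : ℕ) (hm : m + 1 < n) (α β : PermN n), isLD m hm α → isLD m hm β →
      invC α + invC β < invC μ + invC ν → SRel F m hm α β) :
    (SRel F k (Nat.lt_of_succ_lt hk2) μ ν ↔ SRel F (k + 1) hk2 μ ν) := by
  have m1 : isLD (k + 1) hk2 (swapAt n k (Nat.lt_of_succ_lt hk2) * μ) := adj_f1 hk2 hμk hμk1
  have m2 : isLD k (Nat.lt_of_succ_lt hk2) (swapAt n (k + 1) hk2 * μ) := adj_f2 hk2 hμk hμk1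
  have m3 : isLD k (Nat.lt_of_succ_lt hk2) (swapAt n (k + 1) hk2 * (swapAt n k (Nat.lt_of_succ_lt hk2) * μ)) := adj_f3 hk2 hμk hμk1
  have m4 : isLD (k + 1) hk2 (swapAt n k (Nat.lt_of_succ_lt hk2) * (swapAt n (k + 1) hk2 * μ)) := adj_f4 hk2 hμk hμk1
  have n1 : isLD (k + 1) hk2 (swapAt n k (Nat.lt_of_succ_lt hk2) * ν) := adj_f1 hk2 hνk hνk1
  have n2 : isLD k (Nat.lt_of_succ_lt hk2) (swapAt n (k + 1) hk2 * ν) := adj_f2 hk2 hνk hνk1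
  have n3 : isLD k (Nat.lt_of_succ_lt hk2) (swapAt n (k + 1) hk2 * (swapAt n k (Nat.lt_of_succ_lt hk2) * ν)) := adj_f3 hk2 hνk hνk1
  have n4 : isLD (k + 1) hk2 (swapAt n k (Nat.lt_of_succ_lt hk2) * (swapAt n (k + 1) hk2 * ν)) := adj_f4 hk2 hνk hνk1
  have iμ1 : invC (swapAt n k (Nat.lt_of_succ_lt hk2) * μ) < invC μ := invC_lt_of_isLD hμk
  have iμ2 : invC (swapAt n (k + 1) hk2 * μ) < invC μ := invC_lt_of_isLD hμk1
  have iμ3 : invC (swapAt n (k + 1) hk2 * (swapAt n k (Nat.lt_of_succ_lt hk2) * μ)) < invC (swapAt n k (Nat.lt_of_succ_lt hk2) * μ) := invC_lt_of_isLD m1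
  have iμ4 : invC (swapAt n k (Nat.lt_of_succ_lt hk2) * (swapAt n (k + 1) hk2 * μ)) < invC (swapAt n (k + 1) hk2 * μ) := invC_lt_of_isLD m2
  have iν1 : invC (swapAt n k (Nat.lt_of_succ_lt hk2) * ν) < invC ν := invC_lt_of_isLD hνk
  have iν2 : invC (swapAt n (k + 1) hk2 * ν) < invC ν := invC_lt_of_isLD hνk1
  have iν3 : invC (swapAt n (k + 1) hk2 * (swapAt n k (Nat.lt_of_succ_lt hk2) * ν)) < invC (swapAt n k (Nat.lt_of_succ_lt hk2) * ν) := invC_lt_of_isLD n1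
  have iν4 : invC (swapAt n k (Nat.lt_of_succ_lt hk2) * (swapAt n (k + 1) hk2 * ν)) < invC (swapAt n (k + 1) hk2 * ν) := invC_lt_of_isLD n2
  have E1 : SRel F k (Nat.lt_of_succ_lt hk2) (swapAt n (k + 1) hk2 * (swapAt n k (Nat.lt_of_succ_lt hk2) * μ)) (swapAt n (k + 1) hk2 * (swapAt n k (Nat.lt_of_succ_lt hk2) * ν)) :=
    IH _ _ _ _ m3 n3 (by omega)
  have E2 : SRel F k (Nat.lt_of_succ_lt hk2) (swapAt n (k + 1) hk2 * (swapAt n k (Nat.lt_of_succ_lt hk2) * μ)) (swapAt n (k + 1) hk2 * ν) :=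
    IH _ _ _ _ m3 n2 (by omega)
  have E3 : SRel F k (Nat.lt_of_succ_lt hk2) (swapAt n (k + 1) hk2 * (swapAt n k (Nat.lt_of_succ_lt hk2) * μ)) ν := IH _ _ _ _ m3 hνk (by omega)
  have E4 : SRel F k (Nat.lt_of_succ_lt hk2) (swapAt n (k + 1) hk2 * μ) (swapAt n (k + 1) hk2 * (swapAt n k (Nat.lt_of_succ_lt hk2) * ν)) :=
    IH _ _ _ _ m2 n3 (by omega)
  have E5 : SRel F k (Nat.lt_of_succ_lt hk2) (swapAt n (k + 1) hk2 * μ) (swapAt n (k + 1) hk2 * ν) := IH _ _ _ _ m2 n2 (by omega)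
  have E6 : SRel F k (Nat.lt_of_succ_lt hk2) (swapAt n (k + 1) hk2 * μ) ν := IH _ _ _ _ m2 hνk (by omega)
  have E7 : SRel F k (Nat.lt_of_succ_lt hk2) μ (swapAt n (k + 1) hk2 * (swapAt n k (Nat.lt_of_succ_lt hk2) * ν)) := IH _ _ _ _ hμk n3 (by omega)
  have E8 : SRel F k (Nat.lt_of_succ_lt hk2) μ (swapAt n (k + 1) hk2 * ν) := IH _ _ _ _ hμk n2 (by omega)
  have E9 : SRel F (k + 1) hk2 (swapAt n k (Nat.lt_of_succ_lt hk2) * (swapAt n (k + 1) hk2 * μ)) (swapAt n k (Nat.lt_of_succ_lt hk2) * (swapAt n (k + 1) hk2 * ν)) := IH _ _ _ _ m4 n4 (by omega)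
  have E10 : SRel F (k + 1) hk2 (swapAt n k (Nat.lt_of_succ_lt hk2) * (swapAt n (k + 1) hk2 * μ)) (swapAt n k (Nat.lt_of_succ_lt hk2) * ν) := IH _ _ _ _ m4 n1 (by omega)
  have E11 : SRel F (k + 1) hk2 (swapAt n k (Nat.lt_of_succ_lt hk2) * (swapAt n (k + 1) hk2 * μ)) ν := IH _ _ _ _ m4 hνk1 (by omega)
  have E12 : SRel F (k + 1) hk2 (swapAt n k (Nat.lt_of_succ_lt hk2) * μ) (swapAt n k (Nat.lt_of_succ_lt hk2) * (swapAt n (k + 1) hk2 * ν)) := IH _ _ _ _ m1 n4 (by omega)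
  have E13 : SRel F (k + 1) hk2 (swapAt n k (Nat.lt_of_succ_lt hk2) * μ) (swapAt n k (Nat.lt_of_succ_lt hk2) * ν) := IH _ _ _ _ m1 n1 (by omega)
  have E14 : SRel F (k + 1) hk2 (swapAt n k (Nat.lt_of_succ_lt hk2) * μ) ν := IH _ _ _ _ m1 hνk1 (by omega)
  have E15 : SRel F (k + 1) hk2 μ (swapAt n k (Nat.lt_of_succ_lt hk2) * (swapAt n (k + 1) hk2 * ν)) := IH _ _ _ _ hμk1 n4 (by omega)
  have E16 : SRel F (k + 1) hk2 μ (swapAt n k (Nat.lt_of_succ_lt hk2) * ν) := IH _ _ _ _ hμk1 n1 (by omega)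
  have brμ : swapAt n k (Nat.lt_of_succ_lt hk2) * (swapAt n (k + 1) hk2 * (swapAt n k (Nat.lt_of_succ_lt hk2) * μ)) = swapAt n (k + 1) hk2 * (swapAt n k (Nat.lt_of_succ_lt hk2) * (swapAt n (k + 1) hk2 * μ)) := braid hk2 μ
  have brν : swapAt n k (Nat.lt_of_succ_lt hk2) * (swapAt n (k + 1) hk2 * (swapAt n k (Nat.lt_of_succ_lt hk2) * ν)) = swapAt n (k + 1) hk2 * (swapAt n k (Nat.lt_of_succ_lt hk2) * (swapAt n (k + 1) hk2 * ν)) := braid hk2 ν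
  unfold SRel at E1 E2 E3 E4 E5 E6 E7 E8 E9 E10 E11 E12 E13 E14 E15 E16 ⊢
  rw [brμ] at E1 E2 E3
  rw [brν] at E1 E4 E7
  constructor
  · intro H
    linear_combination H + E1 - E2 + E3 + E4 - E5 + E6 + E7 - E8 - E9 + E10 - E11 - E12
      + E13 - E14 - E15 + E16
  · intro H
    linear_combination H - E1 + E2 - E3 - E4 + E5 - E6 - E7 + E8 + E9 - E10 + E11 + E12
      - E13 + E14 + E15 - E16
/-- Common left descents of a pair. -/
def CLD (μ ν : PermN n) : Finset ℕ :=
  (Finset.range n).filter (fun i => ∃ h : i + 1 < n, isLD i h μ ∧ isLD i h ν)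

lemma mem_CLD {μ ν : PermN n} {i : ℕ} (h : i + 1 < n) (h1 : isLD i h μ) (h2 : isLD i h ν) :
    i ∈ CLD μ ν := by
  simp only [CLD, Finset.mem_filter, Finset.mem_range]
  exact ⟨by omega, h, h1, h2⟩

lemma CLD_spec {μ ν : PermN n} {i : ℕ} (hi : i ∈ CLD μ ν) :
    ∃ h : i + 1 < n, isLD i h μ ∧ isLD i h ν := by
  simp only [CLD, Finset.mem_filter, Finset.mem_range] at hi
  exact hi.2

/-- Extension of a function on pairs without common descents to all pairs. -/
def extF (g : PermN n × PermN n → ℂ) (p : PermN n × PermN n) : ℂ :=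
  if hq : (CLD p.1 p.2).Nonempty then
    have hmem := Finset.min'_mem _ hq
    have h : (CLD p.1 p.2).min' hq + 1 < n := (CLD_spec hmem).choose
    extF g (p.1, swapAt n ((CLD p.1 p.2).min' hq) h * p.2) +
      extF g (swapAt n ((CLD p.1 p.2).min' hq) h * p.1,
        swapAt n ((CLD p.1 p.2).min' hq) h * p.2) -
      extF g (swapAt n ((CLD p.1 p.2).min' hq) h * p.1, p.2)
  else g p
termination_by invC p.1 + invC p.2
decreasing_by
  · have hspec := CLD_spec (Finset.min'_mem _ hq)
    have := invC_lt_of_isLD (h := h) hspec.choose_spec.2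
    omega
  all_goals
    have hspec := CLD_spec (Finset.min'_mem _ hq)
    have h1 := invC_lt_of_isLD (h := h) hspec.choose_spec.1
    have h2 := invC_lt_of_isLD (h := h) hspec.choose_spec.2
    omega

lemma extF_of_empty (g : PermN n × PermN n → ℂ) (p : PermN n × PermN n)
    (hq : ¬ (CLD p.1 p.2).Nonempty) : extF g p = g p := by
  rw [extF, dif_neg hq]

lemma extF_rec (g : PermN n × PermN n → ℂ) (μ ν : PermN n) (hq : (CLD μ ν).Nonempty)
    (h : (CLD μ ν).min' hq + 1 < n) :
    extF g (μ, ν) = extF g (μ, swapAt n ((CLD μ ν).min' hq) h * ν) +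
      extF g (swapAt n ((CLD μ ν).min' hq) h * μ, swapAt n ((CLD μ ν).min' hq) h * ν) -
      extF g (swapAt n ((CLD μ ν).min' hq) h * μ, ν) := by
  rw [extF]
  simp only
  rw [dif_pos hq]
lemma extF_rel_topped (g : PermN n × PermN n → ℂ) :
    ∀ N : ℕ, ∀ (μ ν : PermN n) (i : ℕ) (h : i + 1 < n), isLD i h μ → isLD i h ν →
      invC μ + invC ν ≤ N → SRel (extF g) i h μ ν := by
  intro N
  induction N using Nat.strong_induction_on with
  | _ N IH =>
    intro μ ν i h hLμ hLν hle
    have hq : (CLD μ ν).Nonempty := ⟨i, mem_CLD h hLμ hLν⟩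
    obtain ⟨hj, hjμ, hjν⟩ := CLD_spec (Finset.min'_mem _ hq)
    have hdef := extF_rec g μ ν hq hj
    revert hj hjμ hjν hdef
    generalize (CLD μ ν).min' hq = jm
    intro hj hjμ hjν hdef
    have Hjm : SRel (extF g) jm hj μ ν := by
      unfold SRel
      linear_combination hdef
    have IH' : ∀ (m : ℕ) (hm : m + 1 < n) (α β : PermN n), isLD m hm α → isLD m hm β →
        invC α + invC β < invC μ + invC ν → SRel (extF g) m hm α β := by
      intro m hm α β h1 h2 hlt
      exact IH (invC α + invC β) (by omega) α β m hm h1 h2 le_rfl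
    rcases eq_or_ne i jm with rfl | hne
    · exact Hjm
    · rcases Nat.lt_or_ge i jm with hlt | hge
      · rcases Nat.eq_or_lt_of_le (Nat.succ_le_of_lt hlt) with heq | hlt2
        · -- jm = i + 1 : adjacent with k = i
          subst heq
          exact (certAdj (extF g) i hj μ ν hLμ hjμ hLν hjν IH').2 Hjm
        · -- i + 1 < jm : far
          exact (certComm (extF g) i jm h hj hlt2 μ ν hLμ hLν hjμ hjν IH').2 Hjm
      · have hlt : jm < i := Nat.lt_of_le_of_ne hge (Ne.symm hne)
        rcases Nat.eq_or_lt_of_le (Nat.succ_le_of_lt hlt) with heq | hlt2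
        · -- i = jm + 1 : adjacent with k = jm
          subst heq
          exact (certAdj (extF g) jm h μ ν hjμ hLμ hjν hLν IH').1 Hjm
        · -- jm + 1 < i : far
          exact (certComm (extF g) jm i hj h hlt2 μ ν hjμ hjν hLμ hLν IH').1 Hjm
lemma extF_rel (g : PermN n × PermN n → ℂ) (i : ℕ) (h : i + 1 < n) (μ ν : PermN n) :
    SRel (extF g) i h μ ν := by
  by_cases hμ : isLD i h μ <;> by_cases hν : isLD i h ν
  · exact extF_rel_topped g (invC μ + invC ν) μ ν i h hμ hν le_rfl
  · have hν' : isLD i h (swapAt n i h * ν) := (isLD_swap_iff i h ν).2 hν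
    have H := extF_rel_topped g (invC μ + invC (swapAt n i h * ν)) μ (swapAt n i h * ν)
      i h hμ hν' le_rfl
    unfold SRel at H ⊢
    rw [swap_swap_cancel] at H
    linear_combination -H
  · have hμ' : isLD i h (swapAt n i h * μ) := (isLD_swap_iff i h μ).2 hμ
    have H := extF_rel_topped g (invC (swapAt n i h * μ) + invC ν) (swapAt n i h * μ) ν
      i h hμ' hν le_rfl
    unfold SRel at H ⊢
    rw [swap_swap_cancel] at H
    linear_combination H
  · have hμ' : isLD i h (swapAt n i h * μ) := (isLD_swap_iff i h μ).2 hμ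
    have hν' : isLD i h (swapAt n i h * ν) := (isLD_swap_iff i h ν).2 hν
    have H := extF_rel_topped g (invC (swapAt n i h * μ) + invC (swapAt n i h * ν))
      (swapAt n i h * μ) (swapAt n i h * ν) i h hμ' hν' le_rfl
    unfold SRel at H ⊢
    rw [swap_swap_cancel, swap_swap_cancel] at H
    linear_combination -H

/-- A function satisfying all relations and vanishing on descent-disjoint pairs vanishes. -/
lemma vanish (F : PermN n × PermN n → ℂ)
    (hrel : ∀ (i : ℕ) (h : i + 1 < n) (μ ν : PermN n), SRel F i h μ ν)
    (h0 : ∀ μ ν : PermN n, ¬ (CLD μ ν).Nonempty → F (μ, ν) = 0) :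
    ∀ μ ν : PermN n, F (μ, ν) = 0 := by
  suffices hN : ∀ N : ℕ, ∀ μ ν : PermN n, invC μ + invC ν ≤ N → F (μ, ν) = 0 by
    intro μ ν; exact hN _ μ ν le_rfl
  intro N
  induction N using Nat.strong_induction_on with
  | _ N IH =>
    intro μ ν hle
    by_cases hq : (CLD μ ν).Nonempty
    · obtain ⟨i, hi⟩ := hq
      obtain ⟨h, hμ, hν⟩ := CLD_spec hi
      have H := hrel i h μ (swapAt n i h * ν)
      unfold SRel at H
      rw [swap_swap_cancel] at H
      have d1 : invC (swapAt n i h * μ) < invC μ := invC_lt_of_isLD hμ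
      have d2 : invC (swapAt n i h * ν) < invC ν := invC_lt_of_isLD hν
      have z1 : F (μ, swapAt n i h * ν) = 0 :=
        IH (invC μ + invC (swapAt n i h * ν)) (by omega) _ _ le_rfl
      have z2 : F (swapAt n i h * μ, swapAt n i h * ν) = 0 :=
        IH (invC (swapAt n i h * μ) + invC (swapAt n i h * ν)) (by omega) _ _ le_rfl
      have z3 : F (swapAt n i h * μ, ν) = 0 :=
        IH (invC (swapAt n i h * μ) + invC ν) (by omega) _ _ le_rfl
      linear_combination -H + z1 + z2 - z3
    · exact h0 μ ν hq
/-- The space of coefficient functions satisfying all sandwich relations. -/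
def relSpace (n : ℕ) : Submodule ℂ (PermN n × PermN n → ℂ) where
  carrier := {F | ∀ (i : ℕ) (h : i + 1 < n) (μ ν : PermN n), SRel F i h μ ν}
  add_mem' := by
    intro a b ha hb i h μ ν
    have h1 := ha i h μ ν
    have h2 := hb i h μ ν
    unfold SRel at *
    simp only [Pi.add_apply]
    linear_combination h1 + h2
  zero_mem' := by
    intro i h μ ν
    unfold SRel
    simp
  smul_mem' := by
    intro c F hF i h μ ν
    have h1 := hF i h μ ν
    unfold SRel at *
    simp only [Pi.smul_apply, smul_eq_mul]
    linear_combination c * h1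

/-- Pairs with no common left descent. -/
def P0 (n : ℕ) : Type := {p : PermN n × PermN n // ¬ (CLD p.1 p.2).Nonempty}

noncomputable instance : Fintype (P0 n) := by
  unfold P0; exact Fintype.ofFinite _

/-- Restriction to pairs with no common left descent. -/
def resMap (n : ℕ) : relSpace n →ₗ[ℂ] (P0 n → ℂ) where
  toFun F := fun p => F.1 p.1
  map_add' F G := by ext p; simp
  map_smul' c F := by ext p; simp

lemma resMap_bijective (n : ℕ) : Function.Bijective (resMap n) := by
  constructor
  · intro F G hFG
    apply Subtype.ext
    funext p
    have hz : ∀ μ ν : PermN n, (fun q => F.1 q - G.1 q) (μ, ν) = 0 := by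
      refine vanish (fun q => F.1 q - G.1 q) ?_ ?_
      · intro i h μ ν
        have h1 := F.2 i h μ ν
        have h2 := G.2 i h μ ν
        unfold SRel at *
        simp only
        linear_combination h1 - h2
      · intro μ ν hq
        have := congrFun hFG ⟨(μ, ν), hq⟩
        simp only [resMap, LinearMap.coe_mk, AddHom.coe_mk] at this
        linear_combination this
    obtain ⟨μ, ν⟩ := p
    have := hz μ ν
    simp only at this
    linear_combination this
  · intro g
    set g' : PermN n × PermN n → ℂ :=
      fun p => if hp : ¬ (CLD p.1 p.2).Nonempty then g ⟨p, hp⟩ else 0 with hg'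
    refine ⟨⟨extF g', fun i h μ ν => extF_rel g' i h μ ν⟩, ?_⟩
    funext p
    show extF g' p.1 = g p
    rw [extF_of_empty g' p.1 p.2]
    simp only [hg', dif_pos p.2]
    rfl

lemma finrank_relSpace (n : ℕ) :
    Module.finrank ℂ (relSpace n) = Fintype.card (P0 n) := by
  have e : relSpace n ≃ₗ[ℂ] (P0 n → ℂ) := LinearEquiv.ofBijective _ (resMap_bijective n)
  rw [e.finrank_eq]
  exact Module.finrank_pi ℂ

/-- CLD emptiness in terms of descent sets of inverses. -/
lemma CLD_empty_iff (μ ν : PermN n) :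
    ¬ (CLD μ ν).Nonempty ↔ Des n μ⁻¹ ∩ Des n ν⁻¹ = ∅ := by
  rw [Finset.not_nonempty_iff_eq_empty, Finset.eq_empty_iff_forall_notMem,
    Set.eq_empty_iff_forall_notMem]
  constructor
  · intro hc i hi
    rcases hi with ⟨⟨h1, hd1⟩, ⟨h2, hd2⟩⟩
    exact hc i (mem_CLD h1 hd1 hd2)
  · intro hc i hi
    obtain ⟨h, hd1, hd2⟩ := CLD_spec hi
    exact hc i ⟨⟨h, hd1⟩, ⟨h, hd2⟩⟩

def P0equiv (n : ℕ) : P0 n ≃ {p : PermN n × PermN n // Des n p.1 ∩ Des n p.2 = ∅} where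
  toFun p := ⟨(p.1.1⁻¹, p.1.2⁻¹), (CLD_empty_iff p.1.1 p.1.2).1 p.2⟩
  invFun p := ⟨(p.1.1⁻¹, p.1.2⁻¹), by
    apply (CLD_empty_iff p.1.1⁻¹ p.1.2⁻¹).2
    simpa using p.2⟩
  left_inv p := by
    apply Subtype.ext
    simp
  right_inv p := by
    apply Subtype.ext
    simp
lemma sigmaBar_single (i : ℕ) (h : i + 1 < n) (ν : PermN n) (c : ℂ) :
    sigmaBarOp n i (Finsupp.single ν c) = Finsupp.single (swapAt n i h * ν) c := by
  rw [sigmaBarOp, dif_pos h, Finsupp.lmapDomain_apply, Finsupp.mapDomain_single]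

lemma sigmaBar_apply (i : ℕ) (h : i + 1 < n) (X : CS n) (μ : PermN n) :
    (sigmaBarOp n i X) μ = X (swapAt n i h * μ) := by
  rw [sigmaBarOp, dif_pos h, Finsupp.lmapDomain_apply]
  have hfun : (fun μ : PermN n => swapAt n i h * μ) = ⇑(Equiv.mulLeft (swapAt n i h)) := by
    funext x
    simp
  rw [hfun, Finsupp.mapDomain_equiv_apply]
  congr 1

lemma sandwich_coeff (f : Module.End ℂ (CS n)) (i : ℕ) (h : i + 1 < n) (μ ν : PermN n) :
    ((1 + sigmaBarOp n i) * (f * (1 - sigmaBarOp n i))) (Finsupp.single ν 1) μ =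
      f (Finsupp.single ν 1) μ + f (Finsupp.single ν 1) (swapAt n i h * μ)
        - f (Finsupp.single (swapAt n i h * ν) 1) μ
        - f (Finsupp.single (swapAt n i h * ν) 1) (swapAt n i h * μ) := by
  rw [Module.End.mul_apply, Module.End.mul_apply, LinearMap.sub_apply, Module.End.one_apply,
    sigmaBar_single i h, map_sub, LinearMap.add_apply, Module.End.one_apply,
    Finsupp.add_apply, sigmaBar_apply i h, Finsupp.sub_apply, Finsupp.sub_apply]
  ring

/-- From endomorphisms to coefficient functions. -/
def coeffMap (n : ℕ) : Module.End ℂ (CS n) →ₗ[ℂ] (PermN n × PermN n → ℂ) where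
  toFun f := fun p => f (Finsupp.single p.2 1) p.1
  map_add' f g := by funext p; simp
  map_smul' c f := by funext p; simp

lemma coeffMap_bijective (n : ℕ) : Function.Bijective (coeffMap n) := by
  constructor
  · intro f g hfg
    apply Finsupp.lhom_ext
    intro a b
    have hsingle : ∀ ν : PermN n, f (Finsupp.single ν 1) = g (Finsupp.single ν 1) := by
      intro ν
      ext μ
      exact congrFun hfg (μ, ν)
    calc f (Finsupp.single a b) = f (b • Finsupp.single a 1) := by
          rw [Finsupp.smul_single, smul_eq_mul, mul_one]
      _ = b • f (Finsupp.single a 1) := map_smul f b _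
      _ = b • g (Finsupp.single a 1) := by rw [hsingle]
      _ = g (Finsupp.single a b) := by
          rw [← map_smul, Finsupp.smul_single, smul_eq_mul, mul_one]
  · intro F
    refine ⟨Finsupp.lsum ℂ (fun ν => LinearMap.toSpanSingleton ℂ (CS n)
      (Finsupp.equivFunOnFinite.symm (fun μ => F (μ, ν)))), ?_⟩
    funext p
    have h1 : (Finsupp.lsum ℂ (fun ν => LinearMap.toSpanSingleton ℂ (CS n)
        (Finsupp.equivFunOnFinite.symm (fun μ => F (μ, ν))))) (Finsupp.single p.2 1)
        = Finsupp.equivFunOnFinite.symm (fun μ => F (μ, p.2)) := by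
      rw [Finsupp.lsum_single, LinearMap.toSpanSingleton_apply, one_smul]
    show (Finsupp.lsum ℂ (fun ν => LinearMap.toSpanSingleton ℂ (CS n)
        (Finsupp.equivFunOnFinite.symm (fun μ => F (μ, ν))))) (Finsupp.single p.2 1) p.1 = F p
    rw [h1, Finsupp.equivFunOnFinite_symm_apply_apply]

lemma mem_sandwich_iff (f : Module.End ℂ (CS n)) :
    f ∈ sandwichSpace n ↔ coeffMap n f ∈ relSpace n := by
  rw [sandwichSpace, Submodule.mem_iInf]
  constructor
  · intro hf i h μ ν
    have h0 := hf ⟨i, h⟩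
    rw [LinearMap.mem_ker, LinearMap.coe_comp, Function.comp_apply,
      LinearMap.mulRight_apply, LinearMap.mulLeft_apply] at h0
    have hc := congrArg (fun T : Module.End ℂ (CS n) => T (Finsupp.single ν 1) μ) h0
    simp only [LinearMap.zero_apply, Finsupp.coe_zero, Pi.zero_apply] at hc
    rw [sandwich_coeff f i h μ ν] at hc
    show coeffMap n f (μ, ν) + coeffMap n f (swapAt n i h * μ, ν) =
      coeffMap n f (μ, swapAt n i h * ν) + coeffMap n f (swapAt n i h * μ, swapAt n i h * ν)
    show f (Finsupp.single ν 1) μ + f (Finsupp.single ν 1) (swapAt n i h * μ) =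
      f (Finsupp.single (swapAt n i h * ν) 1) μ +
        f (Finsupp.single (swapAt n i h * ν) 1) (swapAt n i h * μ)
    linear_combination hc
  · intro hF j
    obtain ⟨i, h⟩ := j
    rw [LinearMap.mem_ker, LinearMap.coe_comp, Function.comp_apply,
      LinearMap.mulRight_apply, LinearMap.mulLeft_apply]
    apply Finsupp.lhom_ext
    intro ν c
    rw [show (Finsupp.single ν c : CS n) = c • Finsupp.single ν 1 by
      rw [Finsupp.smul_single, smul_eq_mul, mul_one]]
    rw [map_smul, LinearMap.zero_apply]
    suffices hz : ((1 + sigmaBarOp n i) * (f * (1 - sigmaBarOp n i))) (Finsupp.single ν 1) = 0 by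
      rw [hz, smul_zero]
    ext μ
    rw [sandwich_coeff f i h μ ν]
    have hr := hF i h μ ν
    unfold SRel at hr
    simp only [Finsupp.coe_zero, Pi.zero_apply]
    have hr' : f (Finsupp.single ν 1) μ + f (Finsupp.single ν 1) (swapAt n i h * μ) =
        f (Finsupp.single (swapAt n i h * ν) 1) μ +
          f (Finsupp.single (swapAt n i h * ν) 1) (swapAt n i h * μ) := hr
    linear_combination hr'


/-- The solution space of the sandwich equations has dimension the
number of pairs of permutations with disjoint descent sets. -/
theorem sandwich_dim (n : ℕ) (hn : 1 ≤ n) :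
    Module.finrank ℂ ↥(sandwichSpace n) =
      Nat.card {p : PermN n × PermN n // Des n p.1 ∩ Des n p.2 = ∅} := by
  let e : Module.End ℂ (CS n) ≃ₗ[ℂ] (PermN n × PermN n → ℂ) :=
    LinearEquiv.ofBijective _ (coeffMap_bijective n)
  have he : ∀ f, e f = coeffMap n f := fun f => rfl
  have hmap : (sandwichSpace n).map (e : Module.End ℂ (CS n) →ₗ[ℂ] _) = relSpace n := by
    ext F
    constructor
    · rintro ⟨f, hf, rfl⟩
      rw [LinearEquiv.coe_coe, he]
      exact (mem_sandwich_iff f).1 hf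
    · intro hF
      refine ⟨e.symm F, ?_, by simp⟩
      show e.symm F ∈ sandwichSpace n
      rw [mem_sandwich_iff]
      have h2 : coeffMap n (e.symm F) = e (e.symm F) := (he _).symm
      rw [h2, e.apply_symm_apply]
      exact hF
  have h1 : Module.finrank ℂ ↥(sandwichSpace n) = Module.finrank ℂ ↥(relSpace n) := by
    rw [← hmap]
    exact LinearEquiv.finrank_eq (e.submoduleMap (sandwichSpace n))
  rw [h1, finrank_relSpace]
  rw [← Nat.card_eq_fintype_card]
  exact Nat.card_congr (P0equiv n)

end
end

section
/- The following operator identities hold in End(ℂ𝔖_n) (products composed left to right): for 1 ≤ i ≤ n−2, π_{i+1}σ_i = π_{i+1}π_i + σ_iσ_{i+1}π_iπ_{i+1} − π_iπ_{i+1}π_i and π_iσ_{i+1} = π_iπ_{i+1} + σ_{i+1}σ_iπ_{i+1}π_i − π_iπ_{i+1}π_i; and, for n ≥ 3, σ_1π_2σ_1 = σ_2π_1σ_2. -/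
open scoped Classical

set_option maxHeartbeats 1000000
set_option synthInstance.maxHeartbeats 400000

noncomputable section

lemma sigmaOp_single (n i : ℕ) (h : i + 1 < n) (μ : PermN n) (b : ℂ) :
    sigmaOp n i (Finsupp.single μ b) = Finsupp.single (μ * swapAt n i h) b := by
  rw [sigmaOp, dif_pos h]; exact Finsupp.mapDomain_single

lemma piOp_single (n i : ℕ) (h : i + 1 < n) (μ : PermN n) (b : ℂ) :
    piOp n i (Finsupp.single μ b) =
      Finsupp.single (if μ ⟨i + 1, h⟩ < μ ⟨i, Nat.lt_of_succ_lt h⟩ then μ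
        else μ * swapAt n i h) b := by
  rw [piOp, dif_pos h]; exact Finsupp.mapDomain_single

lemma operator_identities_aux (n i : ℕ) (hi : i + 2 < n) :
    (sigmaOp n i * piOp n (i+1) =
        piOp n i * piOp n (i+1)
          + piOp n (i+1) * piOp n i * sigmaOp n (i+1) * sigmaOp n i
          - piOp n i * piOp n (i+1) * piOp n i) ∧
    (sigmaOp n (i+1) * piOp n i =
        piOp n (i+1) * piOp n i
          + piOp n i * piOp n (i+1) * sigmaOp n i * sigmaOp n (i+1)
          - piOp n i * piOp n (i+1) * piOp n i) ∧
    (sigmaOp n i * piOp n (i+1) * sigmaOp n i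
        = sigmaOp n (i+1) * piOp n i * sigmaOp n (i+1)) := by
  have h1 : i + 1 < n := by omega
  have h2 : i + 1 + 1 < n := by omega
  have hi0 : i < n := by omega
  set x0 : Fin n := ⟨i, hi0⟩ with hx0
  set x1 : Fin n := ⟨i+1, h1⟩ with hx1
  set x2 : Fin n := ⟨i+2, hi⟩ with hx2
  have n01 : x0 ≠ x1 := by simp [hx0, hx1, Fin.ext_iff]
  have n02 : x0 ≠ x2 := by simp [hx0, hx2, Fin.ext_iff]
  have n12 : x1 ≠ x2 := by simp [hx1, hx2, Fin.ext_iff]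
  have hs : swapAt n i h1 = Equiv.swap x0 x1 := rfl
  have ht : swapAt n (i+1) h2 = Equiv.swap x1 x2 := rfl
  have ea : Equiv.swap x0 x1 x0 = x1 := Equiv.swap_apply_left _ _
  have eb : Equiv.swap x0 x1 x1 = x0 := Equiv.swap_apply_right _ _
  have ec : Equiv.swap x0 x1 x2 = x2 := Equiv.swap_apply_of_ne_of_ne (Ne.symm n02) (Ne.symm n12)
  have ed : Equiv.swap x1 x2 x0 = x0 := Equiv.swap_apply_of_ne_of_ne n01 n02
  have ee : Equiv.swap x1 x2 x1 = x2 := Equiv.swap_apply_left _ _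
  have ef : Equiv.swap x1 x2 x2 = x1 := Equiv.swap_apply_right _ _
  have hgoalx0 : (⟨i, Nat.lt_of_succ_lt h1⟩ : Fin n) = x0 := rfl
  have hgoalx1 : (⟨i+1, Nat.lt_of_succ_lt h2⟩ : Fin n) = x1 := rfl
  have hgoalx2 : (⟨i+1+1, h2⟩ : Fin n) = x2 := rfl
  -- braid relations
  have e1 : Equiv.swap x1 x2 * Equiv.swap x0 x1 * Equiv.swap x1 x2 = Equiv.swap x2 x0 :=
    Equiv.swap_mul_swap_mul_swap n01 n02
  have e2 : Equiv.swap x0 x1 * Equiv.swap x1 x2 * Equiv.swap x0 x1 = Equiv.swap x0 x2 := by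
    rw [Equiv.swap_comm x0 x1, Equiv.swap_comm x1 x2]
    exact Equiv.swap_mul_swap_mul_swap (Ne.symm n12) (Ne.symm n02)
  have hC : ∀ ν : PermN n, ν * Equiv.swap x0 x1 * Equiv.swap x1 x2 * Equiv.swap x0 x1
      = ν * Equiv.swap x1 x2 * Equiv.swap x0 x1 * Equiv.swap x1 x2 := by
    intro ν
    simp only [mul_assoc]
    rw [show Equiv.swap x0 x1 * (Equiv.swap x1 x2 * Equiv.swap x0 x1)
        = Equiv.swap x1 x2 * (Equiv.swap x0 x1 * Equiv.swap x1 x2) from by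
      have := e1.trans ((Equiv.swap_comm x2 x0).trans e2.symm)
      simpa only [mul_assoc] using this.symm]
  have hAt : ∀ ν : PermN n, ν * Equiv.swap x1 x2 * Equiv.swap x1 x2 = ν := by
    intro ν; rw [mul_assoc, Equiv.swap_mul_self, mul_one]
  have hAs : ∀ ν : PermN n, ν * Equiv.swap x0 x1 * Equiv.swap x0 x1 = ν := by
    intro ν; rw [mul_assoc, Equiv.swap_mul_self, mul_one]
  have hB1 : ∀ ν : PermN n, ν * Equiv.swap x0 x1 * Equiv.swap x1 x2 * Equiv.swap x0 x1
      * Equiv.swap x1 x2 = ν * Equiv.swap x1 x2 * Equiv.swap x0 x1 := by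
    intro ν; rw [hC ν, hAt]
  have hB2 : ∀ ν : PermN n, ν * Equiv.swap x1 x2 * Equiv.swap x0 x1 * Equiv.swap x1 x2
      * Equiv.swap x0 x1 = ν * Equiv.swap x0 x1 * Equiv.swap x1 x2 := by
    intro ν; rw [← hC ν, hAs]
  refine ⟨?_, ?_, ?_⟩ <;>
  · apply Finsupp.lhom_ext
    intro μ b
    have nAB : μ x0 ≠ μ x1 := fun h => n01 (μ.injective h)
    have nAC : μ x0 ≠ μ x2 := fun h => n02 (μ.injective h)
    have nBC : μ x1 ≠ μ x2 := fun h => n12 (μ.injective h)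
    rcases lt_or_gt_of_ne nAB with hab | hab <;>
    rcases lt_or_gt_of_ne nAC with hac | hac <;>
    rcases lt_or_gt_of_ne nBC with hbc | hbc <;>
    simp only [Module.End.mul_apply, LinearMap.add_apply, LinearMap.sub_apply,
      sigmaOp_single n i h1, sigmaOp_single n (i+1) h2,
      piOp_single n i h1, piOp_single n (i+1) h2, hgoalx0, hgoalx1, hgoalx2, hs, ht,
      Equiv.Perm.mul_apply, ea, eb, ec, ed, ee, ef,
      hab, hac, hbc, hab.not_gt, hac.not_gt, hbc.not_gt,
      if_true, if_false, gt_iff_lt, hAt, hAs, hB1, hB2, hC] <;>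
    first
      | exact absurd hac (lt_asymm (hab.trans hbc))
      | exact absurd hac (lt_asymm (hbc.trans hab))
      | abel

/-- The operator identities (20) of the paper, written in `Module.End`
(where the paper's left-to-right word `f₁f₂⋯f_p` is `f_p * ⋯ * f₂ * f₁`). -/
theorem operator_identities (n : ℕ) (hn : 1 ≤ n) :
    (∀ i : ℕ, i + 2 < n →
      sigmaOp n i * piOp n (i+1) =
        piOp n i * piOp n (i+1)
          + piOp n (i+1) * piOp n i * sigmaOp n (i+1) * sigmaOp n i
          - piOp n i * piOp n (i+1) * piOp n i) ∧
    (∀ i : ℕ, i + 2 < n →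
      sigmaOp n (i+1) * piOp n i =
        piOp n (i+1) * piOp n i
          + piOp n i * piOp n (i+1) * sigmaOp n i * sigmaOp n (i+1)
          - piOp n i * piOp n (i+1) * piOp n i) ∧
    (3 ≤ n →
      sigmaOp n 0 * piOp n 1 * sigmaOp n 0 = sigmaOp n 1 * piOp n 0 * sigmaOp n 1) := by
  refine ⟨fun i hi => (operator_identities_aux n i hi).1,
    fun i hi => (operator_identities_aux n i hi).2.1,
    fun h3 => (operator_identities_aux n 0 (by omega)).2.2⟩

end
end

section
/- For every subset D ⊆ {1,…,n−1}, the families {v_D · σ_σ : σ ∈ 𝔖_n, Des(σ⁻¹) ⊆ D} and {v_σ : σ ∈ 𝔖_n, Des(σ⁻¹) ⊆ D} are both vector space bases of P_D. In particular, dim P_D = n!/(i_1! i_2! ⋯ i_k!), where (i_1,…,i_k) is the unique composition of n whose descent set {i_1, i_1+i_2, …, i_1+⋯+i_{k−1}} equals D. -/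
open scoped Classical

set_option maxHeartbeats 1000000
set_option synthInstance.maxHeartbeats 400000

noncomputable section

/-- The module `P_D`: the vectors of `ℂ𝔖ₙ` that are left `i`-antisymmetric
for every `i ∉ D` (0-indexed, `i+1 < n`). -/
def PD (n : ℕ) (D : Set ℕ) : Submodule ℂ (CS n) :=
  ⨅ i : {i : ℕ // i + 1 < n ∧ i ∉ D}, LinearMap.ker (1 + sigmaBarOp n i.1)

/-- The Young subgroup `𝔖_⟨D⟩` generated by the `sᵢ` for `i ∉ D`. -/
def Young (n : ℕ) (D : Set ℕ) : Subgroup (PermN n) :=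
  Subgroup.closure {g | ∃ i, ∃ h : i + 1 < n, i ∉ D ∧ g = swapAt n i h}

/-- The vector `v_D = ∑_{ν ∈ 𝔖_⟨D⟩} (-1)^{ℓ(ν)} ν` (the sign `(-1)^{ℓ(ν)}` is the
signature of `ν`). -/
def vD (n : ℕ) (D : Set ℕ) : CS n :=
  ∑ᶠ ν ∈ (Young n D : Set (PermN n)),
    ((Equiv.Perm.sign ν : ℤ) : ℂ) • Finsupp.single ν 1

/-- The vector `v_σ := v_{Des(σ⁻¹)} · σ_σ`. -/
def vPerm (n : ℕ) (σ : PermN n) : CS n :=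
  rightMulOp n σ (vD n (Des n σ⁻¹))

namespace PDaux

open Finset Equiv

variable {n : ℕ}

def bf (D : Set ℕ) (x : Fin n) : ℕ := ((Finset.range x).filter (· ∈ D)).card

lemma bf_mono {D : Set ℕ} : Monotone (bf (n := n) D) := by
  intro x y hxy
  exact Finset.card_le_card (Finset.filter_subset_filter _ (Finset.range_subset_range.2 hxy))

lemma lt_of_bf_lt {D : Set ℕ} {a b : Fin n} (h : bf D a < bf D b) : a < b := by
  by_contra hc
  exact absurd (bf_mono (D := D) (not_lt.1 hc)) (by omega)

lemma bf_succ (D : Set ℕ) {i : ℕ} (h : i + 1 < n) :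
    bf D ⟨i + 1, h⟩ = bf D ⟨i, Nat.lt_of_succ_lt h⟩ + (if i ∈ D then 1 else 0) := by
  unfold bf
  simp only [Finset.range_add_one, Finset.filter_insert]
  split
  · rw [Finset.card_insert_of_notMem (by simp)]
  · simp

lemma bf_adj_of_not_mem {D : Set ℕ} {i : ℕ} (h : i + 1 < n) (hi : i ∉ D) :
    bf D ⟨i + 1, h⟩ = bf D ⟨i, Nat.lt_of_succ_lt h⟩ := by
  rw [bf_succ D h, if_neg hi, add_zero]

lemma not_mem_of_bf_adj {D : Set ℕ} {i : ℕ} (h : i + 1 < n)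
    (he : bf D ⟨i + 1, h⟩ = bf D ⟨i, Nat.lt_of_succ_lt h⟩) : i ∉ D := by
  intro hi
  rw [bf_succ D h, if_pos hi] at he
  omega

lemma swapAt_apply_of_ne {i : ℕ} (h : i + 1 < n) {x : Fin n}
    (h1 : x ≠ ⟨i, Nat.lt_of_succ_lt h⟩) (h2 : x ≠ ⟨i + 1, h⟩) : swapAt n i h x = x :=
  Equiv.swap_apply_of_ne_of_ne h1 h2

lemma bf_swapAt {D : Set ℕ} {i : ℕ} (h : i + 1 < n) (hi : i ∉ D) (x : Fin n) :
    bf D (swapAt n i h x) = bf D x := by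
  rcases eq_or_ne x ⟨i, Nat.lt_of_succ_lt h⟩ with rfl | h1
  · rw [swapAt, Equiv.swap_apply_left, bf_adj_of_not_mem h hi]
  rcases eq_or_ne x ⟨i + 1, h⟩ with rfl | h2
  · rw [swapAt, Equiv.swap_apply_right, bf_adj_of_not_mem h hi]
  · rw [swapAt_apply_of_ne h h1 h2]

def invCount (π : PermN n) : ℕ :=
  ((Finset.univ : Finset (Fin n × Fin n)).filter
    (fun p => p.1 < p.2 ∧ π p.2 < π p.1)).card

lemma strictMono_of_adj {f : Fin n → Fin n}
    (hf : ∀ i (h : i + 1 < n), f ⟨i, Nat.lt_of_succ_lt h⟩ < f ⟨i + 1, h⟩) :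
    StrictMono f := by
  have key : ∀ (k : ℕ) (x y : Fin n), (y : ℕ) = (x : ℕ) + k + 1 → f x < f y := by
    intro k
    induction k with
    | zero =>
      intro x y hxy
      have h : (x : ℕ) + 1 < n := hxy ▸ y.isLt
      have hx : x = ⟨(x : ℕ), Nat.lt_of_succ_lt h⟩ := by ext; rfl
      have hy : y = ⟨(x : ℕ) + 1, h⟩ := Fin.ext (show (y : ℕ) = (x : ℕ) + 1 by omega)
      rw [hx, hy]; exact hf _ h
    | succ k ih =>
      intro x y hxy
      have hm : (x : ℕ) + k + 1 < n := by have := y.isLt; omega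
      exact (ih x ⟨(x : ℕ) + k + 1, hm⟩ rfl).trans
        (by
          have h : ((x : ℕ) + k + 1) + 1 < n := by have := y.isLt; omega
          have hy : y = ⟨(x : ℕ) + k + 1 + 1, h⟩ := Fin.ext (show (y : ℕ) = (x : ℕ) + k + 1 + 1 by omega)
          rw [hy]; exact hf _ h)
  intro x y hxy
  obtain ⟨k, hk⟩ : ∃ k, (y : ℕ) = (x : ℕ) + k + 1 := ⟨(y : ℕ) - (x : ℕ) - 1, by omega⟩
  exact key k x y hk

lemma eq_one_of_invCount {π : PermN n} (h : invCount π = 0) : π = 1 := by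
  haveI : WellFoundedLT (Fin n) := Finite.to_wellFoundedLT
  rw [invCount, Finset.card_eq_zero] at h
  have hsm : StrictMono π := by
    have hno : ∀ x y : Fin n, x < y → ¬ (π y < π x) := by
      intro x y hxy hc
      have : (x, y) ∈ (Finset.univ : Finset (Fin n × Fin n)).filter
          (fun p => p.1 < p.2 ∧ π p.2 < π p.1) := by
        simp [hxy, hc]
      rw [h] at this
      exact absurd this (Finset.notMem_empty _)
    intro x y hxy
    rcases lt_trichotomy (π x) (π y) with h1 | h1 | h1
    · exact h1
    · exact absurd (π.injective h1) hxy.ne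
    · exact absurd h1 (hno x y hxy)
  have hsm' : StrictMono (π⁻¹ : PermN n) := by
    intro a b hab
    rcases lt_trichotomy ((π⁻¹ : PermN n) a) ((π⁻¹ : PermN n) b) with h1 | h1 | h1
    · exact h1
    · exact absurd ((π⁻¹ : PermN n).injective h1) hab.ne
    · have := hsm h1
      simp at this
      omega
  ext x
  have h1 : x ≤ π x := hsm.le_apply
  have h2 : x ≤ (π⁻¹ : PermN n) x := hsm'.le_apply
  have h3 : π x ≤ π ((π⁻¹ : PermN n) x) := hsm.monotone h2
  simp at h3
  simp
  omega

lemma invCount_pos_of_ne_one {π : PermN n} (h : π ≠ 1) : 0 < invCount π :=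
  Nat.pos_of_ne_zero (fun hc => h (eq_one_of_invCount hc))

lemma exists_descent_of_ne_one {π : PermN n} (h : π ≠ 1) :
    ∃ i, ∃ hi : i + 1 < n, π ⟨i + 1, hi⟩ < π ⟨i, Nat.lt_of_succ_lt hi⟩ := by
  by_contra hc
  push_neg at hc
  apply h
  have hsm : StrictMono π := by
    apply strictMono_of_adj
    intro i hi
    have h1 := hc i hi
    rcases lt_trichotomy (π ⟨i, Nat.lt_of_succ_lt hi⟩) (π ⟨i + 1, hi⟩) with h2 | h2 | h2
    · exact h2
    · exact absurd (π.injective h2) (by simp [Fin.ext_iff])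
    · exact absurd h2 (not_lt.2 h1)
  have : invCount π = 0 := by
    rw [invCount, Finset.card_eq_zero, Finset.filter_eq_empty_iff]
    rintro ⟨x, y⟩ _
    simp only [not_and, not_lt]
    intro hxy
    exact (hsm hxy).le
  exact eq_one_of_invCount this

lemma invCount_mul_swap_lt {π : PermN n} {i : ℕ} (h : i + 1 < n)
    (hd : π ⟨i + 1, h⟩ < π ⟨i, Nat.lt_of_succ_lt h⟩) :
    invCount (π * swapAt n i h) < invCount π := by
  set ii : Fin n := ⟨i, Nat.lt_of_succ_lt h⟩ with hii
  set jj : Fin n := ⟨i + 1, h⟩ with hjj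
  set s := swapAt n i h with hs
  have hsii : s ii = jj := Equiv.swap_apply_left _ _
  have hsjj : s jj = ii := Equiv.swap_apply_right _ _
  have hiijj : ii < jj := by simp [hii, hjj, Fin.lt_def]
  set A := (Finset.univ : Finset (Fin n × Fin n)).filter
    (fun p => p.1 < p.2 ∧ π p.2 < π p.1) with hA
  set A' := (Finset.univ : Finset (Fin n × Fin n)).filter
    (fun p => p.1 < p.2 ∧ (π * s) p.2 < (π * s) p.1) with hA'
  have hmem : (ii, jj) ∈ A := by simp [hA, hiijj, hd]
  have hsub : ∀ p ∈ A', (s p.1, s p.2) ∈ A.erase (ii, jj) := by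
    rintro ⟨x, y⟩ hp
    simp only [hA', Finset.mem_filter, Finset.mem_univ, true_and] at hp
    obtain ⟨hxy, hinv⟩ := hp
    have hinv' : π (s y) < π (s x) := hinv
    have hlt : s x < s y := by
      rcases eq_or_ne x ii with rfl | hx1
      · rcases eq_or_ne y jj with rfl | hy2
        · rw [hsii, hsjj] at hinv'
          exact absurd hinv' (asymm hd)
        · have hy1 : y ≠ ii := hxy.ne'
          rw [hsii, swapAt_apply_of_ne h hy1 hy2]
          rw [Fin.lt_def] at hxy ⊢
          simp only [hii, hjj] at *
          have : (y : ℕ) ≠ i + 1 := fun hc => hy2 (by ext; exact hc)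
          omega
      rcases eq_or_ne x jj with rfl | hx2
      · have hy1 : y ≠ ii := fun hc => absurd (hc ▸ hxy) (asymm hiijj)
        have hy2 : y ≠ jj := hxy.ne'
        rw [hsjj, swapAt_apply_of_ne h hy1 hy2]
        exact hiijj.trans hxy
      · rw [swapAt_apply_of_ne h hx1 hx2]
        rcases eq_or_ne y ii with rfl | hy1
        · rw [hsii]; exact hxy.trans hiijj
        rcases eq_or_ne y jj with rfl | hy2
        · rw [hsjj]
          rw [Fin.lt_def] at hxy ⊢
          simp only [hii, hjj] at *
          have : (x : ℕ) ≠ i := fun hc => hx1 (by ext; exact hc)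
          omega
        · rw [swapAt_apply_of_ne h hy1 hy2]; exact hxy
    refine Finset.mem_erase.2 ⟨?_, ?_⟩
    · intro hc
      have h1 : s x = ii := (Prod.ext_iff.1 hc).1
      have h2 : s y = jj := (Prod.ext_iff.1 hc).2
      have hxeq : x = jj := s.injective (h1.trans hsjj.symm)
      have hyeq : y = ii := s.injective (h2.trans hsii.symm)
      rw [hxeq, hyeq] at hxy
      exact absurd hxy (asymm hiijj)
    · simp only [hA, Finset.mem_filter, Finset.mem_univ, true_and]
      exact ⟨hlt, hinv'⟩
  have hinj : Set.InjOn (fun p : Fin n × Fin n => (s p.1, s p.2)) A' := by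
    rintro ⟨a, b⟩ _ ⟨c, d⟩ _ hcd
    simp only [Prod.mk.injEq] at hcd
    exact Prod.ext (s.injective hcd.1) (s.injective hcd.2)
  calc invCount (π * s) = A'.card := rfl
    _ ≤ (A.erase (ii, jj)).card := Finset.card_le_card_of_injOn _ hsub hinj
    _ < A.card := Finset.card_lt_card (Finset.erase_ssubset hmem)
lemma swapAt_mem_young {D : Set ℕ} {i : ℕ} (h : i + 1 < n) (hi : i ∉ D) :
    swapAt n i h ∈ Young n D :=
  Subgroup.subset_closure ⟨i, h, hi, rfl⟩

lemma bf_eq_of_mem_young {D : Set ℕ} {ν : PermN n} (hν : ν ∈ Young n D) (x : Fin n) :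
    bf D (ν x) = bf D x := by
  revert x
  induction hν using Subgroup.closure_induction with
  | mem g hg => obtain ⟨i, h, hi, rfl⟩ := hg; exact bf_swapAt h hi
  | one => intro x; rfl
  | mul a b ha hb iha ihb => intro x; rw [Equiv.Perm.mul_apply, iha, ihb]
  | inv a ha ih => intro x; simpa using (ih (a⁻¹ x)).symm

lemma mem_young_of_bf {D : Set ℕ} : ∀ (N : ℕ) (π : PermN n), invCount π ≤ N →
    (∀ x, bf D (π x) = bf D x) → π ∈ Young n D := by
  intro N
  induction N with
  | zero =>
    intro π h _
    rw [eq_one_of_invCount (Nat.le_zero.1 h)]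
    exact one_mem _
  | succ N ih =>
    intro π hN hbf
    by_cases hone : π = 1
    · rw [hone]; exact one_mem _
    obtain ⟨i, hi, hd⟩ := exists_descent_of_ne_one hone
    have hbe : bf D ⟨i + 1, hi⟩ = bf D ⟨i, Nat.lt_of_succ_lt hi⟩ := by
      have h1 : bf D (π ⟨i + 1, hi⟩) ≤ bf D (π ⟨i, Nat.lt_of_succ_lt hi⟩) := bf_mono hd.le
      rw [hbf, hbf] at h1
      have h2 : bf D ⟨i, Nat.lt_of_succ_lt hi⟩ ≤ bf D ⟨i + 1, hi⟩ :=
        bf_mono (by simp [Fin.le_def])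
      omega
    have hiD : i ∉ D := not_mem_of_bf_adj hi hbe
    have hbf' : ∀ x, bf D ((π * swapAt n i hi) x) = bf D x := fun x => by
      rw [Equiv.Perm.mul_apply]
      exact (hbf _).trans (bf_swapAt hi hiD x)
    have hlt := invCount_mul_swap_lt hi hd
    have hmem := ih (π * swapAt n i hi) (by omega) hbf'
    have hπ : π = (π * swapAt n i hi) * swapAt n i hi := by
      rw [mul_assoc, swapAt, Equiv.swap_mul_self, mul_one]
    rw [hπ]
    exact mul_mem hmem (swapAt_mem_young hi hiD)

lemma inv_lt_adj {E : Set ℕ} {σ : PermN n} (hdes : Des n σ⁻¹ ⊆ E) {i : ℕ} (h : i + 1 < n)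
    (hbe : bf E ⟨i + 1, h⟩ = bf E ⟨i, Nat.lt_of_succ_lt h⟩) :
    σ⁻¹ ⟨i, Nat.lt_of_succ_lt h⟩ < σ⁻¹ ⟨i + 1, h⟩ := by
  have hiE : i ∉ E := not_mem_of_bf_adj h hbe
  have hnd : i ∉ Des n σ⁻¹ := fun hc => hiE (hdes hc)
  rw [Des, Set.mem_setOf_eq] at hnd
  push_neg at hnd
  have h1 := hnd h
  have h2 : σ⁻¹ ⟨i, Nat.lt_of_succ_lt h⟩ ≠ σ⁻¹ ⟨i + 1, h⟩ := fun hc => by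
    have := σ⁻¹.injective hc
    simp [Fin.ext_iff] at this
  exact lt_of_le_of_ne h1 h2

lemma inv_lt_of_bf_eq_aux {E : Set ℕ} {σ : PermN n} (hdes : Des n σ⁻¹ ⊆ E) :
    ∀ (k : ℕ) (u v : Fin n), (v : ℕ) = (u : ℕ) + k + 1 → bf E u = bf E v →
      σ⁻¹ u < σ⁻¹ v := by
  intro k
  induction k with
  | zero =>
    intro u v hk hbe
    have h : (u : ℕ) + 1 < n := hk ▸ v.isLt
    have hu : u = ⟨(u : ℕ), Nat.lt_of_succ_lt h⟩ := Fin.ext rfl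
    have hv : v = ⟨(u : ℕ) + 1, h⟩ := Fin.ext (by simp only [Fin.val_mk]; omega)
    rw [hu, hv]
    exact inv_lt_adj hdes h (by rw [← hu, ← hv]; exact hbe.symm)
  | succ k ih =>
    intro u v hk hbe
    have hmlt : (u : ℕ) + k + 1 < n := by have := v.isLt; omega
    set m : Fin n := ⟨(u : ℕ) + k + 1, hmlt⟩ with hmd
    have hum : bf E u ≤ bf E m := bf_mono (by simp only [Fin.le_def, hmd, Fin.val_mk]; omega)
    have hmv : bf E m ≤ bf E v := bf_mono (by simp only [Fin.le_def, hmd, Fin.val_mk]; omega)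
    have h1 : bf E u = bf E m := by omega
    have h2 : bf E m = bf E v := by omega
    have ha := ih u m rfl h1
    have h3 : (u : ℕ) + k + 1 + 1 < n := hk ▸ v.isLt
    have hv : v = ⟨(u : ℕ) + k + 1 + 1, h3⟩ := Fin.ext (by simp only [Fin.val_mk]; omega)
    refine ha.trans ?_
    rw [hv]
    exact inv_lt_adj hdes h3 (by rw [← hv]; exact h2.symm)

lemma inv_lt_of_bf_eq {E : Set ℕ} {σ : PermN n} (hdes : Des n σ⁻¹ ⊆ E) {u v : Fin n}
    (huv : u < v) (hbe : bf E u = bf E v) : σ⁻¹ u < σ⁻¹ v := by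
  obtain ⟨k, hk⟩ : ∃ k, (v : ℕ) = (u : ℕ) + k + 1 :=
    ⟨(v : ℕ) - (u : ℕ) - 1, by have := Fin.lt_def.1 huv; omega⟩
  exact inv_lt_of_bf_eq_aux hdes k u v hk hbe

lemma invCount_lt_mul {E : Set ℕ} {σ ν : PermN n} (hdes : Des n σ⁻¹ ⊆ E)
    (hν : ∀ x, bf E (ν x) = bf E x) (hne : ν ≠ 1) :
    invCount σ < invCount (ν * σ) := by
  set A := (Finset.univ : Finset (Fin n × Fin n)).filter
    (fun p => p.1 < p.2 ∧ σ p.2 < σ p.1) with hA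
  set B := (Finset.univ : Finset (Fin n × Fin n)).filter
    (fun p => p.1 < p.2 ∧ (ν * σ) p.2 < (ν * σ) p.1) with hB
  have hsub : A ⊆ B := by
    rintro ⟨x, y⟩ hp
    simp only [hA, Finset.mem_filter, Finset.mem_univ, true_and] at hp
    obtain ⟨hxy, hinv⟩ := hp
    have hble : bf E (σ y) ≤ bf E (σ x) := bf_mono hinv.le
    have hbne : bf E (σ y) < bf E (σ x) := by
      rcases lt_or_eq_of_le hble with h | h
      · exact h
      · have := inv_lt_of_bf_eq hdes hinv h
        simp only [Equiv.Perm.coe_inv, Equiv.symm_apply_apply] at this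
        exact absurd hxy (asymm this)
    have hb2 : bf E (ν (σ y)) < bf E (ν (σ x)) := by rw [hν, hν]; exact hbne
    simp only [hB, Finset.mem_filter, Finset.mem_univ, true_and]
    exact ⟨hxy, lt_of_bf_lt hb2⟩
  have hνpos := invCount_pos_of_ne_one hne
  rw [invCount, Finset.card_pos] at hνpos
  obtain ⟨⟨u, v⟩, hp⟩ := hνpos
  simp only [Finset.mem_filter, Finset.mem_univ, true_and] at hp
  obtain ⟨huv, hvu⟩ := hp
  have hbuv : bf E u = bf E v := by
    have h1 : bf E u ≤ bf E v := bf_mono huv.le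
    have h2 : bf E (ν v) ≤ bf E (ν u) := bf_mono hvu.le
    rw [hν, hν] at h2
    omega
  have hxy : σ⁻¹ u < σ⁻¹ v := inv_lt_of_bf_eq hdes huv hbuv
  have hBmem : (σ⁻¹ u, σ⁻¹ v) ∈ B := by
    simp only [hB, Finset.mem_filter, Finset.mem_univ, true_and]
    refine ⟨hxy, ?_⟩
    simp only [Equiv.Perm.mul_apply, Equiv.Perm.coe_inv, Equiv.apply_symm_apply]
    exact hvu
  have hAmem : (σ⁻¹ u, σ⁻¹ v) ∉ A := by
    simp only [hA, Finset.mem_filter, Finset.mem_univ, true_and, not_and, not_lt]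
    intro _
    simp only [Equiv.Perm.coe_inv, Equiv.apply_symm_apply]
    exact huv.le
  exact Finset.card_lt_card ((Finset.ssubset_iff_of_subset hsub).2 ⟨_, hBmem, hAmem⟩)

lemma exists_decomp (D : Set ℕ) (μ : PermN n) :
    ∃ ν σ : PermN n, (∀ x, bf D (ν x) = bf D x) ∧ Des n σ⁻¹ ⊆ D ∧ μ = ν * σ := by
  set F : Fin n → ℕ ×ₗ ℕ := fun x => toLex (bf D x, ((μ⁻¹ x : Fin n) : ℕ)) with hF
  set π := Tuple.sort F with hπ
  have hmono : Monotone (F ∘ π) := Tuple.monotone_sort F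
  have hFinj : Function.Injective F := by
    intro a b hab
    have h2 : ((μ⁻¹ a : Fin n) : ℕ) = ((μ⁻¹ b : Fin n) : ℕ) :=
      congrArg (fun p : ℕ ×ₗ ℕ => (ofLex p).2) hab
    exact μ⁻¹.injective (Fin.ext h2)
  have hsm : StrictMono (F ∘ π) :=
    hmono.strictMono_of_injective (hFinj.comp π.injective)
  have hbπmono : Monotone (bf D ∘ π) := by
    intro a b hab
    have hl := hmono hab
    rcases Prod.Lex.le_iff.1 hl with hfst | ⟨hfst, _⟩
    · exact hfst.le
    · exact hfst.le
  have hbπ : ∀ x, bf D (π x) = bf D x := by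
    have hu := Tuple.unique_monotone (f := bf D) (σ := π) (τ := Equiv.refl _)
      hbπmono (by simpa using bf_mono (D := D))
    intro x
    exact congrFun hu x
  refine ⟨π, π⁻¹ * μ, hbπ, ?_, by group⟩
  intro i hi
  obtain ⟨h, hlt⟩ := hi
  simp only [mul_inv_rev, inv_inv, Equiv.Perm.mul_apply] at hlt
  by_contra hiD
  have hb : bf D ⟨i + 1, h⟩ = bf D ⟨i, Nat.lt_of_succ_lt h⟩ := bf_adj_of_not_mem h hiD
  have hlex : F (π ⟨i, Nat.lt_of_succ_lt h⟩) < F (π ⟨i + 1, h⟩) :=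
    hsm (by simp [Fin.lt_def])
  rw [Prod.Lex.lt_iff] at hlex
  rcases hlex with hfst | ⟨_, hsnd⟩
  · simp only [hF, ofLex_toLex, hbπ] at hfst
    omega
  · have := Fin.lt_def.1 hlt
    simp only [hF, ofLex_toLex] at hsnd
    omega

lemma decomp_unique {D : Set ℕ} {ν ν' σ σ' : PermN n}
    (hν : ∀ x, bf D (ν x) = bf D x) (hν' : ∀ x, bf D (ν' x) = bf D x)
    (hσ : Des n σ⁻¹ ⊆ D) (hσ' : Des n σ'⁻¹ ⊆ D) (heq : ν * σ = ν' * σ') :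
    σ = σ' ∧ ν = ν' := by
  have hσσ' : σ = σ' := by
    by_contra hne
    set ρ := ν'⁻¹ * ν with hρ
    have hρpres : ∀ x, bf D (ρ x) = bf D x := by
      intro x
      have h1 := hν' (ρ x)
      have h2 : ν' (ρ x) = ν x := by simp [hρ, Equiv.Perm.mul_apply]
      rw [h2] at h1
      rw [← h1, hν]
    have hρσ : ρ * σ = σ' := by
      rw [hρ, mul_assoc, heq, ← mul_assoc, inv_mul_cancel, one_mul]
    have hρne : ρ ≠ 1 := fun hone => hne (by rw [← hρσ, hone, one_mul])
    have h1 : invCount σ < invCount σ' := hρσ ▸ invCount_lt_mul hσ hρpres hρne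
    have hρinvpres : ∀ x, bf D (ρ⁻¹ x) = bf D x := fun x => by
      simpa using (hρpres (ρ⁻¹ x)).symm
    have hρ'σ : ρ⁻¹ * σ' = σ := by rw [← hρσ]; group
    have hρ'ne : ρ⁻¹ ≠ 1 := fun hone => hρne (by rwa [inv_eq_one] at hone)
    have h2 : invCount σ' < invCount σ := hρ'σ ▸ invCount_lt_mul hσ' hρinvpres hρ'ne
    omega
  subst hσσ'
  exact ⟨rfl, mul_right_cancel heq⟩
def Wfin (n : ℕ) (E : Set ℕ) : Finset (PermN n) :=
  (Set.toFinite ((Young n E : Subgroup (PermN n)) : Set (PermN n))).toFinset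

lemma mem_Wfin {E : Set ℕ} {ν : PermN n} : ν ∈ Wfin n E ↔ ν ∈ Young n E := by
  rw [Wfin, Set.Finite.mem_toFinset, SetLike.mem_coe]

def sgn (ν : PermN n) : ℂ := ((Equiv.Perm.sign ν : ℤ) : ℂ)

lemma sgn_one : sgn (1 : PermN n) = 1 := by simp [sgn]

lemma sgn_mul (a b : PermN n) : sgn (a * b) = sgn a * sgn b := by
  simp [sgn, ← Int.cast_mul, ← Units.val_mul]

lemma sgn_inv (a : PermN n) : sgn a⁻¹ = sgn a := by
  simp [sgn]

lemma sgn_mul_self (a : PermN n) : sgn a * sgn a = 1 := by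
  rw [← sgn_mul]
  rcases Int.units_eq_one_or (Equiv.Perm.sign a) with h | h <;> simp [sgn, h]

lemma sgn_swapAt {i : ℕ} (h : i + 1 < n) : sgn (swapAt n i h) = -1 := by
  rw [sgn, swapAt, Equiv.Perm.sign_swap (by simp [Fin.ext_iff])]
  simp

lemma vD_eq_sum (E : Set ℕ) :
    vD n E = ∑ ν ∈ Wfin n E, sgn ν • Finsupp.single ν 1 := by
  rw [vD, show ((Young n E : Subgroup (PermN n)) : Set (PermN n)) = ↑(Wfin n E) from
    (Set.Finite.coe_toFinset _).symm]
  simp only [sgn]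
  exact finsum_mem_coe_finset (fun ν => ((Equiv.Perm.sign ν : ℤ) : ℂ) • Finsupp.single ν (1 : ℂ)) (Wfin n E)

lemma genVec_eq_sum (E : Set ℕ) (σ : PermN n) :
    rightMulOp n σ (vD n E) = ∑ ν ∈ Wfin n E, sgn ν • Finsupp.single (ν * σ) 1 := by
  rw [vD_eq_sum, map_sum]
  refine Finset.sum_congr rfl fun ν _ => ?_
  rw [map_smul]
  congr 1
  simp only [rightMulOp, Finsupp.lmapDomain_apply, Finsupp.mapDomain_single]

lemma genVec_apply (E : Set ℕ) (σ μ : PermN n) :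
    rightMulOp n σ (vD n E) μ = if μ * σ⁻¹ ∈ Young n E then sgn (μ * σ⁻¹) else 0 := by
  rw [genVec_eq_sum, Finsupp.finset_sum_apply]
  have hterm : ∀ ν ∈ Wfin n E,
      (sgn ν • Finsupp.single (ν * σ) (1 : ℂ)) μ = if ν = μ * σ⁻¹ then sgn ν else 0 := by
    intro ν _
    rw [Finsupp.smul_apply, Finsupp.single_apply,
      if_congr (show ν * σ = μ ↔ ν = μ * σ⁻¹ from eq_mul_inv_iff_mul_eq.symm) rfl rfl]
    split <;> simp
  rw [Finset.sum_congr rfl hterm, Finset.sum_ite_eq' (Wfin n E) (μ * σ⁻¹) sgn]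
  rw [if_congr (show μ * σ⁻¹ ∈ Wfin n E ↔ μ * σ⁻¹ ∈ Young n E from mem_Wfin) rfl rfl]

lemma swapAt_mul_swapAt_mul {i : ℕ} (h : i + 1 < n) (μ : PermN n) :
    swapAt n i h * (swapAt n i h * μ) = μ := by
  rw [← mul_assoc, swapAt, Equiv.swap_mul_self, one_mul]

lemma sigmaBar_apply {i : ℕ} (h : i + 1 < n) (f : CS n) (μ : PermN n) :
    (sigmaBarOp n i f) μ = f (swapAt n i h * μ) := by
  rw [sigmaBarOp, dif_pos h, Finsupp.lmapDomain_apply]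
  have hinj : Function.Injective (fun ρ : PermN n => swapAt n i h * ρ) :=
    fun a b hab => by simpa using hab
  conv_lhs => rw [show μ = swapAt n i h * (swapAt n i h * μ) from
    (swapAt_mul_swapAt_mul h μ).symm]
  exact Finsupp.mapDomain_apply hinj f _

lemma mem_PD_iff {f : CS n} {D : Set ℕ} :
    f ∈ PD n D ↔ ∀ (i : ℕ) (h : i + 1 < n), i ∉ D → ∀ μ, f (swapAt n i h * μ) = - f μ := by
  rw [PD, Submodule.mem_iInf]
  constructor
  · intro hf i h hiD μ
    have h1 := hf ⟨i, h, hiD⟩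
    rw [LinearMap.mem_ker] at h1
    have h2 := DFunLike.congr_fun h1 μ
    rw [LinearMap.add_apply, Module.End.one_apply, Finsupp.add_apply,
      sigmaBar_apply h f μ] at h2
    simp only [Finsupp.coe_zero, Pi.zero_apply] at h2
    linear_combination h2
  · rintro hf ⟨i, h, hiD⟩
    rw [LinearMap.mem_ker]
    ext μ
    rw [LinearMap.add_apply, Module.End.one_apply, Finsupp.add_apply,
      sigmaBar_apply h f μ, hf i h hiD μ]
    simp

lemma apply_young_mul {D : Set ℕ} {f : CS n} (hf : f ∈ PD n D) {ν : PermN n}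
    (hν : ν ∈ Young n D) : ∀ g : PermN n, f (ν * g) = sgn ν * f g := by
  induction hν using Subgroup.closure_induction with
  | mem x hx =>
    obtain ⟨i, h, hiD, rfl⟩ := hx
    intro g
    rw [mem_PD_iff.1 hf i h hiD g, sgn_swapAt h]
    ring
  | one => intro g; rw [one_mul, sgn_one, one_mul]
  | mul a b ha hb iha ihb =>
    intro g
    rw [mul_assoc, iha, ihb, sgn_mul]
    ring
  | inv a ha ih =>
    intro g
    have h1 := ih (a⁻¹ * g)
    rw [← mul_assoc, mul_inv_cancel, one_mul] at h1
    rw [sgn_inv]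
    have h2 := sgn_mul_self a
    calc f (a⁻¹ * g) = (sgn a * sgn a) * f (a⁻¹ * g) := by rw [h2, one_mul]
      _ = sgn a * f g := by rw [mul_assoc, ← h1]

lemma genVec_mem_PD {D E : Set ℕ} (hE : ∀ i, i + 1 < n → i ∉ D → i ∉ E) (σ : PermN n) :
    rightMulOp n σ (vD n E) ∈ PD n D := by
  rw [mem_PD_iff]
  intro i h hiD μ
  rw [genVec_apply, genVec_apply]
  have hsE : swapAt n i h ∈ Young n E := swapAt_mem_young h (hE i h hiD)
  have hrw : swapAt n i h * μ * σ⁻¹ = swapAt n i h * (μ * σ⁻¹) := by group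
  rw [hrw]
  by_cases hm : μ * σ⁻¹ ∈ Young n E
  · rw [if_pos hm, if_pos (mul_mem hsE hm), sgn_mul, sgn_swapAt h]
    ring
  · rw [if_neg hm, if_neg (fun hc => hm ?_), neg_zero]
    have := mul_mem (inv_mem hsE) hc
    rwa [← mul_assoc, inv_mul_cancel, one_mul] at this
lemma exists_decomp_young (D : Set ℕ) (μ : PermN n) :
    ∃ ν σ : PermN n, ν ∈ Young n D ∧ Des n σ⁻¹ ⊆ D ∧ μ = ν * σ := by
  obtain ⟨ν, σ, hb, hd, he⟩ := exists_decomp D μ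
  exact ⟨ν, σ, mem_young_of_bf (invCount ν) ν le_rfl hb, hd, he⟩

lemma one_bf_pres (D : Set ℕ) : ∀ x : Fin n, bf D ((1 : PermN n) x) = bf D x :=
  fun _ => rfl

lemma genVecD_apply_S {D : Set ℕ} {σ τ : PermN n} (hσ : Des n σ⁻¹ ⊆ D)
    (hτ : Des n τ⁻¹ ⊆ D) :
    rightMulOp n σ (vD n D) τ = if τ = σ then 1 else 0 := by
  rw [genVec_apply]
  rcases eq_or_ne τ σ with rfl | hne
  · rw [if_pos rfl, mul_inv_cancel, if_pos (one_mem _), sgn_one]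
  · rw [if_neg hne, if_neg]
    intro hc
    have heq : (τ * σ⁻¹) * σ = 1 * τ := by group
    have := (decomp_unique (bf_eq_of_mem_young hc) (one_bf_pres D) hσ hτ heq).1
    exact hne this.symm

lemma expansion {D : Set ℕ} {f : CS n} (hf : f ∈ PD n D) :
    f = ∑ σ : {σ : PermN n // Des n σ⁻¹ ⊆ D}, f σ.1 • rightMulOp n σ.1 (vD n D) := by
  ext μ
  obtain ⟨ν, σ₀, hν, hσ₀, rfl⟩ := exists_decomp_young D μ
  rw [Finsupp.finset_sum_apply]
  rw [apply_young_mul hf hν σ₀]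
  rw [Finset.sum_eq_single (⟨σ₀, hσ₀⟩ : {σ : PermN n // Des n σ⁻¹ ⊆ D})]
  · rw [Finsupp.smul_apply, genVec_apply]
    have hr : ν * σ₀ * σ₀⁻¹ = ν := by group
    rw [hr, if_pos hν, smul_eq_mul]
    ring
  · intro τ _ hτne
    rw [Finsupp.smul_apply, genVec_apply, if_neg, smul_zero]
    intro hc
    have heq2 : (ν * σ₀ * τ.1⁻¹) * τ.1 = ν * σ₀ := by group
    have := (decomp_unique (bf_eq_of_mem_young hc) (bf_eq_of_mem_young hν) τ.2 hσ₀ heq2).1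
    exact hτne (Subtype.ext this)
  · intro habs
    exact absurd (Finset.mem_univ _) habs

lemma w_li (D : Set ℕ) : LinearIndependent ℂ
    (fun σ : {σ : PermN n // Des n σ⁻¹ ⊆ D} => rightMulOp n σ.1 (vD n D)) := by
  rw [Fintype.linearIndependent_iff]
  intro c hc τ
  have h1 := DFunLike.congr_fun hc τ.1
  rw [Finsupp.finset_sum_apply] at h1
  simp only [Finsupp.smul_apply, smul_eq_mul, Finsupp.coe_zero, Pi.zero_apply] at h1
  rw [Finset.sum_eq_single τ] at h1
  · rw [genVecD_apply_S τ.2 τ.2, if_pos rfl, mul_one] at h1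
    exact h1
  · intro σ _ hne
    rw [genVecD_apply_S σ.2 τ.2, if_neg (fun h => hne (Subtype.ext h.symm)), mul_zero]
  · intro habs
    exact absurd (Finset.mem_univ _) habs

lemma w_mem_PD (D : Set ℕ) (σ : PermN n) : rightMulOp n σ (vD n D) ∈ PD n D :=
  genVec_mem_PD (fun _ _ hiD => hiD) σ

lemma w_span (D : Set ℕ) :
    Submodule.span ℂ (Set.range
      (fun σ : {σ : PermN n // Des n σ⁻¹ ⊆ D} => rightMulOp n σ.1 (vD n D))) = PD n D := by
  apply le_antisymm
  · rw [Submodule.span_le]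
    rintro x ⟨σ, rfl⟩
    exact w_mem_PD D σ.1
  · intro f hf
    rw [expansion hf]
    exact Submodule.sum_mem _ fun σ _ =>
      Submodule.smul_mem _ _ (Submodule.subset_span ⟨σ, rfl⟩)

lemma finrank_PD (D : Set ℕ) :
    Module.finrank ℂ (PD n D) = Fintype.card {σ : PermN n // Des n σ⁻¹ ⊆ D} := by
  rw [← w_span D, finrank_span_eq_card (w_li D)]

lemma vPerm_mem_PD {D : Set ℕ} {σ : PermN n} (hσ : Des n σ⁻¹ ⊆ D) :
    vPerm n σ ∈ PD n D :=
  genVec_mem_PD (fun _ _ hiD hc => hiD (hσ hc)) σ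

lemma vPerm_apply_self (σ : PermN n) : vPerm n σ σ = 1 := by
  rw [vPerm, genVec_apply, mul_inv_cancel, if_pos (one_mem _), sgn_one]

lemma invCount_lt_of_vPerm_ne {σ τ : PermN n} (hne : τ ≠ σ) (hv : vPerm n σ τ ≠ 0) :
    invCount σ < invCount τ := by
  rw [vPerm, genVec_apply] at hv
  by_cases hc : τ * σ⁻¹ ∈ Young n (Des n σ⁻¹)
  swap
  · rw [if_neg hc] at hv
    exact absurd rfl hv
  have hb := bf_eq_of_mem_young hc
  have hρ1 : τ * σ⁻¹ ≠ 1 := fun h1 => hne (by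
    have := congrArg (· * σ) h1
    simpa [mul_assoc] using this)
  have hfin := invCount_lt_mul (E := Des n σ⁻¹) (σ := σ) (subset_refl _) hb hρ1
  rwa [show τ * σ⁻¹ * σ = τ by group] at hfin

lemma v_li (D : Set ℕ) : LinearIndependent ℂ
    (fun σ : {σ : PermN n // Des n σ⁻¹ ⊆ D} => vPerm n σ.1) := by
  rw [Fintype.linearIndependent_iff]
  intro c hc
  by_contra hcon
  push_neg at hcon
  obtain ⟨τ₀, hτ₀⟩ := hcon
  have hne : (Finset.univ.filter
      fun σ : {σ : PermN n // Des n σ⁻¹ ⊆ D} => c σ ≠ 0).Nonempty :=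
    ⟨τ₀, by simp [hτ₀]⟩
  obtain ⟨σ₀, hσ₀mem, hσ₀min⟩ := Finset.exists_min_image _ (fun σ => invCount σ.1) hne
  simp only [Finset.mem_filter, Finset.mem_univ, true_and] at hσ₀mem
  have h1 := DFunLike.congr_fun hc σ₀.1
  rw [Finsupp.finset_sum_apply] at h1
  simp only [Finsupp.smul_apply, smul_eq_mul, Finsupp.coe_zero, Pi.zero_apply] at h1
  rw [Finset.sum_eq_single σ₀] at h1
  · rw [vPerm_apply_self, mul_one] at h1
    exact hσ₀mem h1
  · intro σ _ hneσ
    by_cases hc0 : c σ = 0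
    · rw [hc0, zero_mul]
    · have hmin := hσ₀min σ (by simp [hc0])
      have hvz : vPerm n σ.1 σ₀.1 = 0 := by
        by_contra hvnz
        have hne2 : σ₀.1 ≠ σ.1 := fun h => hneσ (Subtype.ext h.symm)
        have := invCount_lt_of_vPerm_ne hne2 hvnz
        omega
      rw [hvz, mul_zero]
  · intro habs
    exact absurd (Finset.mem_univ _) habs

lemma v_span (D : Set ℕ) :
    Submodule.span ℂ (Set.range
      (fun σ : {σ : PermN n // Des n σ⁻¹ ⊆ D} => vPerm n σ.1)) = PD n D := by
  haveI : FiniteDimensional ℂ (PD n D) := by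
    rw [← w_span D]
    exact FiniteDimensional.span_of_finite ℂ (Set.finite_range _)
  have hle : Submodule.span ℂ (Set.range
      (fun σ : {σ : PermN n // Des n σ⁻¹ ⊆ D} => vPerm n σ.1)) ≤ PD n D := by
    rw [Submodule.span_le]
    rintro x ⟨σ, rfl⟩
    exact vPerm_mem_PD σ.2
  refine Submodule.eq_of_le_of_finrank_le hle ?_
  rw [finrank_span_eq_card (v_li D), finrank_PD D]
lemma card_perm_eq (D : Set ℕ) :
    Fintype.card (PermN n) =
      Fintype.card (Young n D) * Fintype.card {σ : PermN n // Des n σ⁻¹ ⊆ D} := by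
  rw [← Fintype.card_prod]
  refine (Fintype.card_congr (Equiv.ofBijective
    (fun p : (Young n D) × {σ : PermN n // Des n σ⁻¹ ⊆ D} => p.1.1 * p.2.1)
    ⟨?_, ?_⟩)).symm
  · rintro ⟨⟨ν, hν⟩, ⟨σ, hσ⟩⟩ ⟨⟨ν', hν'⟩, ⟨σ', hσ'⟩⟩ h
    obtain ⟨h1, h2⟩ := decomp_unique (bf_eq_of_mem_young hν) (bf_eq_of_mem_young hν')
      hσ hσ' h
    simp only [Prod.mk.injEq, Subtype.mk.injEq]
    exact ⟨h2, h1⟩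
  · intro μ
    obtain ⟨ν, σ, hν, hσ, rfl⟩ := exists_decomp_young D μ
    exact ⟨(⟨ν, hν⟩, ⟨σ, hσ⟩), rfl⟩

def bFin (D : Set ℕ) (x : Fin n) : Fin n :=
  ⟨bf D x, lt_of_le_of_lt
    (le_trans (Finset.card_filter_le _ _) (by simp)) x.isLt⟩

lemma card_young_prod (D : Set ℕ) :
    Fintype.card (Young n D) =
      ∏ i : Fin n, Nat.factorial (Fintype.card {a : Fin n // bFin D a = i}) := by
  rw [← DomMulAct.stabilizer_card (bFin D)]
  apply Fintype.card_congr
  apply Equiv.subtypeEquivRight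
  intro g
  constructor
  · intro hg
    funext x
    exact Fin.ext (bf_eq_of_mem_young hg x)
  · intro hg
    exact mem_young_of_bf _ g le_rfl (fun x => congrArg Fin.val (congrFun hg x))

section comp

variable {c : List ℕ} {D : Set ℕ}

lemma S_strict (hpos : ∀ x ∈ c, 0 < x) {t1 t2 : ℕ} (h1 : t1 < t2) (h2 : t2 ≤ c.length) :
    (c.take t1).sum < (c.take t2).sum := by
  induction t2 with
  | zero => omega
  | succ t ih =>
    have hlt : t < c.length := h2
    rw [List.sum_take_succ _ _ hlt]
    have hp := hpos (c.get ⟨t, hlt⟩) (List.get_mem c ⟨t, hlt⟩)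
    simp only [List.get_eq_getElem] at hp
    rcases Nat.lt_or_ge t1 t with h | h
    · have := ih h (by omega); omega
    · have ht : t1 = t := by omega
      subst ht; omega

lemma S_mono' (t1 t2 : ℕ) (h : t1 ≤ t2) : (c.take t1).sum ≤ (c.take t2).sum := by
  have h1 : c.take t2 = (c.take t2).take t1 ++ (c.take t2).drop t1 :=
    (List.take_append_drop _ _).symm
  rw [List.take_take, min_eq_left h] at h1
  calc (c.take t1).sum ≤ (c.take t1).sum + ((c.take t2).drop t1).sum :=
        Nat.le_add_right _ _
    _ = (c.take t2).sum := by rw [← List.sum_append, ← h1]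

lemma S_pos (hpos : ∀ x ∈ c, 0 < x) {t : ℕ} (h1 : 1 ≤ t) (h2 : t ≤ c.length) :
    1 ≤ (c.take t).sum := by
  have := S_strict hpos (show 0 < t from h1) h2
  simp at this; omega

lemma bf_formula (hpos : ∀ x ∈ c, 0 < x)
    (hcD : {j : ℕ | ∃ k, 0 < k ∧ k < c.length ∧ j + 1 = (c.take k).sum} = D)
    (x : Fin n) :
    bf D x = ((Finset.Ico 1 c.length).filter (fun t => (c.take t).sum ≤ x.val)).card := by
  rw [bf]
  symm
  apply Finset.card_bij (fun t _ => (c.take t).sum - 1)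
  · intro t ht
    simp only [Finset.mem_filter, Finset.mem_Ico] at ht
    obtain ⟨⟨ht1, ht2⟩, ht3⟩ := ht
    have hge := S_pos hpos ht1 ht2.le
    simp only [Finset.mem_filter, Finset.mem_range]
    refine ⟨by omega, ?_⟩
    rw [← hcD]
    exact ⟨t, ht1, ht2, by omega⟩
  · intro t1 ht1 t2 ht2 he
    simp only [Finset.mem_filter, Finset.mem_Ico] at ht1 ht2
    have g1 := S_pos hpos ht1.1.1 ht1.1.2.le
    have g2 := S_pos hpos ht2.1.1 ht2.1.2.le
    by_contra hne
    rcases Nat.lt_or_ge t1 t2 with h | h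
    · have := S_strict hpos h ht2.1.2.le; omega
    · have h' : t2 < t1 := by omega
      have := S_strict hpos h' ht1.1.2.le; omega
  · intro j hj
    simp only [Finset.mem_filter, Finset.mem_range] at hj
    obtain ⟨hjx, hjD⟩ := hj
    rw [← hcD] at hjD
    obtain ⟨k, hk1, hk2, hk3⟩ := hjD
    refine ⟨k, ?_, by omega⟩
    simp only [Finset.mem_filter, Finset.mem_Ico]
    exact ⟨⟨hk1, hk2⟩, by omega⟩

lemma exists_block (hn : 1 ≤ n) (hsum : c.sum = n) (hpos : ∀ x ∈ c, 0 < x) (x : Fin n) :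
    ∃ m, m < c.length ∧ (c.take m).sum ≤ x.val ∧ x.val < (c.take (m + 1)).sum := by
  have hlen : 1 ≤ c.length := by
    rcases c with _ | ⟨a, c⟩
    · simp at hsum; omega
    · simp
  set P : ℕ → Prop := fun t => (c.take t).sum ≤ x.val with hP
  have hP0 : P 0 := by simp [hP]
  set m := Nat.findGreatest P (c.length - 1) with hm
  have hPm : P m := Nat.findGreatest_spec (m := 0) (n := c.length - 1) (Nat.zero_le _) hP0
  have hmle : m ≤ c.length - 1 := Nat.findGreatest_le (c.length - 1)
  refine ⟨m, by omega, hPm, ?_⟩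
  rcases Nat.lt_or_ge (m + 1) c.length with h | h
  · have hnp : ¬ P (m + 1) := Nat.findGreatest_is_greatest (n := c.length - 1) (k := m + 1) (by omega) (by omega)
    simp only [hP, not_le] at hnp
    exact hnp
  · have hml : m + 1 = c.length := by omega
    rw [hml, List.take_length, hsum]
    exact x.isLt

lemma bf_eq_of_interval (hpos : ∀ x ∈ c, 0 < x)
    (hcD : {j : ℕ | ∃ k, 0 < k ∧ k < c.length ∧ j + 1 = (c.take k).sum} = D)
    {x : Fin n} {m : ℕ} (hm : m < c.length)
    (h1 : (c.take m).sum ≤ x.val) (h2 : x.val < (c.take (m + 1)).sum) :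
    bf D x = m := by
  rw [bf_formula hpos hcD x]
  have hset : (Finset.Ico 1 c.length).filter (fun t => (c.take t).sum ≤ x.val)
      = Finset.Ico 1 (m + 1) := by
    ext t
    simp only [Finset.mem_filter, Finset.mem_Ico]
    constructor
    · rintro ⟨⟨ht1, ht2⟩, ht3⟩
      refine ⟨ht1, ?_⟩
      by_contra hcon
      have hle : m + 1 ≤ t := by omega
      have := S_mono' (c := c) (m + 1) t hle
      omega
    · rintro ⟨ht1, ht2⟩
      have hSle : (c.take t).sum ≤ (c.take m).sum := S_mono' t m (by omega)
      exact ⟨⟨ht1, by omega⟩, by omega⟩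
  rw [hset, Nat.card_Ico]
  omega

lemma interval_of_bf_eq (hn : 1 ≤ n) (hsum : c.sum = n) (hpos : ∀ x ∈ c, 0 < x)
    (hcD : {j : ℕ | ∃ k, 0 < k ∧ k < c.length ∧ j + 1 = (c.take k).sum} = D)
    {x : Fin n} {m : ℕ} (hbf : bf D x = m) :
    m < c.length ∧ (c.take m).sum ≤ x.val ∧ x.val < (c.take (m + 1)).sum := by
  obtain ⟨m', hm', h1, h2⟩ := exists_block hn hsum hpos x
  have hb2 : bf D x = m' := bf_eq_of_interval hpos hcD hm' h1 h2
  have : m = m' := by omega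
  subst this
  exact ⟨hm', h1, h2⟩

lemma card_val_interval (lo hi : ℕ) (hhi : hi ≤ n) :
    Fintype.card {a : Fin n // lo ≤ a.val ∧ a.val < hi} = hi - lo := by
  rw [← Nat.card_Ico lo hi, ← Fintype.card_coe]
  apply Fintype.card_congr
  refine ⟨fun a => ⟨a.1.1, Finset.mem_Ico.2 ⟨a.2.1, a.2.2⟩⟩,
    fun j => ⟨⟨j.1, lt_of_lt_of_le (Finset.mem_Ico.1 j.2).2 hhi⟩,
      (Finset.mem_Ico.1 j.2).1, (Finset.mem_Ico.1 j.2).2⟩, ?_, ?_⟩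
  · intro a
    exact Subtype.ext (Fin.ext rfl)
  · intro j
    exact Subtype.ext rfl

lemma S_le_n (hsum : c.sum = n) (t : ℕ) (h : t ≤ c.length) : (c.take t).sum ≤ n := by
  have := S_mono' (c := c) t c.length h
  rwa [List.take_length, hsum] at this

lemma card_fiber_lt (hn : 1 ≤ n) (hsum : c.sum = n) (hpos : ∀ x ∈ c, 0 < x)
    (hcD : {j : ℕ | ∃ k, 0 < k ∧ k < c.length ∧ j + 1 = (c.take k).sum} = D)
    {i : Fin n} (hi : i.val < c.length) :
    Fintype.card {a : Fin n // bFin D a = i} = c.getD i.val 1 := by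
  have he : ∀ a : Fin n,
      (bFin D a = i) ↔ ((c.take i.val).sum ≤ a.val ∧ a.val < (c.take (i.val + 1)).sum) := by
    intro a
    constructor
    · intro h
      exact (interval_of_bf_eq hn hsum hpos hcD (congrArg Fin.val h)).2
    · intro h
      exact Fin.ext (bf_eq_of_interval hpos hcD hi h.1 h.2)
  rw [Fintype.card_congr (Equiv.subtypeEquivRight he),
    card_val_interval _ _ (S_le_n hsum _ hi),
    List.sum_take_succ _ _ hi, List.getD_eq_getElem c 1 hi]
  omega

lemma card_fiber_ge (hn : 1 ≤ n) (hsum : c.sum = n) (hpos : ∀ x ∈ c, 0 < x)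
    (hcD : {j : ℕ | ∃ k, 0 < k ∧ k < c.length ∧ j + 1 = (c.take k).sum} = D)
    {i : Fin n} (hi : c.length ≤ i.val) :
    Fintype.card {a : Fin n // bFin D a = i} = 0 := by
  rw [Fintype.card_eq_zero_iff]
  refine ⟨fun a => ?_⟩
  have := (interval_of_bf_eq hn hsum hpos hcD (congrArg Fin.val a.2)).1
  omega

lemma length_le_sum (hpos : ∀ x ∈ c, 0 < x) : c.length ≤ c.sum := by
  induction c with
  | nil => simp
  | cons a l ih =>
    simp only [List.length_cons, List.sum_cons]
    have h1 := hpos a List.mem_cons_self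
    have h2 := ih (fun x hx => hpos x (List.mem_cons_of_mem _ hx))
    omega

lemma prod_getD_factorial (c : List ℕ) :
    ∏ j ∈ Finset.range c.length, Nat.factorial (c.getD j 1) = (c.map Nat.factorial).prod := by
  induction c with
  | nil => simp
  | cons a l ih =>
    rw [List.length_cons, Finset.prod_range_succ', List.map_cons, List.prod_cons]
    simp only [List.getD_cons_succ, List.getD_cons_zero]
    rw [ih, mul_comm]

lemma card_young_comp (hn : 1 ≤ n) (hsum : c.sum = n) (hpos : ∀ x ∈ c, 0 < x)
    (hcD : {j : ℕ | ∃ k, 0 < k ∧ k < c.length ∧ j + 1 = (c.take k).sum} = D) :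
    Fintype.card (Young n D) = (c.map Nat.factorial).prod := by
  rw [card_young_prod D]
  have hstep : ∀ i : Fin n,
      Nat.factorial (Fintype.card {a : Fin n // bFin D a = i}) = Nat.factorial (c.getD i.val 1) := by
    intro i
    rcases Nat.lt_or_ge i.val c.length with hi | hi
    · rw [card_fiber_lt hn hsum hpos hcD hi]
    · rw [card_fiber_ge hn hsum hpos hcD hi, List.getD_eq_default c 1 hi]
      decide
  rw [Finset.prod_congr rfl (fun i _ => hstep i)]
  have hlen : c.length ≤ n := le_trans (length_le_sum hpos) (le_of_eq hsum)
  rw [Fin.prod_univ_eq_prod_range (fun j => Nat.factorial (c.getD j 1)) n]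
  rw [← Finset.prod_subset (Finset.range_subset_range.2 hlen) (fun j _ hj => by
    rw [List.getD_eq_default c 1 (by
      simp only [Finset.mem_range, not_lt] at hj
      exact le_trans (le_refl _) (by simpa using hj))]
    exact rfl)]
  exact prod_getD_factorial c

end comp

end PDaux

/-- The families `{v_D · σ_σ}` and `{v_σ}`, indexed by the
permutations `σ` with `Des(σ⁻¹) ⊆ D`, are bases of `P_D`; in particular
`dim P_D = n!/(i₁!⋯i_k!)` for the composition `(i₁,…,i_k)` of `n` with descent
set `D`. -/
theorem PD_bases (n : ℕ) (hn : 1 ≤ n) (D : Set ℕ) (hD : ∀ i ∈ D, i + 1 < n) :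
    LinearIndependent ℂ
      (fun σ : {σ : PermN n // Des n σ⁻¹ ⊆ D} => rightMulOp n σ.1 (vD n D)) ∧
    Submodule.span ℂ
      (Set.range (fun σ : {σ : PermN n // Des n σ⁻¹ ⊆ D} => rightMulOp n σ.1 (vD n D)))
      = PD n D ∧
    LinearIndependent ℂ
      (fun σ : {σ : PermN n // Des n σ⁻¹ ⊆ D} => vPerm n σ.1) ∧
    Submodule.span ℂ
      (Set.range (fun σ : {σ : PermN n // Des n σ⁻¹ ⊆ D} => vPerm n σ.1)) = PD n D ∧
    (∀ c : List ℕ, c.sum = n → (∀ x ∈ c, 0 < x) →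
      {j : ℕ | ∃ k, 0 < k ∧ k < c.length ∧ j + 1 = (c.take k).sum} = D →
      Module.finrank ℂ ↥(PD n D) = Nat.factorial n / (c.map Nat.factorial).prod) := by
  refine ⟨PDaux.w_li D, PDaux.w_span D, PDaux.v_li D, PDaux.v_span D, ?_⟩
  intro c hcsum hcpos hcD
  rw [PDaux.finrank_PD D]
  have h1 : Nat.factorial n = Fintype.card (PermN n) := by
    rw [Fintype.card_perm, Fintype.card_fin]
  have h2 := PDaux.card_perm_eq (n := n) D
  have h3 := PDaux.card_young_comp (n := n) (D := D) hn hcsum hcpos hcD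
  have hpos : 0 < (c.map Nat.factorial).prod := by
    apply List.prod_pos
    intro x hx
    obtain ⟨y, _, rfl⟩ := List.mem_map.1 hx
    exact Nat.factorial_pos y
  have hmain : Nat.factorial n =
      Fintype.card {σ : PermN n // Des n σ⁻¹ ⊆ D} * (c.map Nat.factorial).prod := by
    rw [h1, h2, h3, Nat.mul_comm]
  exact (Nat.div_eq_of_eq_mul_left hpos hmain).symm
end
end
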